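/- arXiv:1803.00284 — 4 statements merged into one kernel-verified Lean document; each statement's English description precedes it below -/
import Mathlib

section
/- For every undirected graph G on at least two vertices, the strong subgraph 2-connectivity of the complete biorientation of G equals the vertex connectivity of G, i.e. κ₂(↔G) = κ(G). -/
/-- A digraph on vertex type `V`: a directed graph without parallel arcs,
given by its arc relation. -/
structure Digr (V : Type*) where
  Adj : V → V → Prop

/-- A subdigraph of a digraph `D`: a set of vertices together with a set of
arcs of `D` whose endpoints lie in the vertex set. -/
structure Subdigr {V : Type*} (D : Digr V) where
  verts : Set V
  arcs : Set (V × V)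
  arcs_adj : ∀ a ∈ arcs, D.Adj a.1 a.2
  arcs_verts : ∀ a ∈ arcs, a.1 ∈ verts ∧ a.2 ∈ verts

/-- A subdigraph is strong (strongly connected) if every vertex reaches every
other vertex by a directed walk using its arcs.  A single vertex is strong. -/
def Subdigr.IsStrong {V : Type*} {D : Digr V} (H : Subdigr D) : Prop :=
  ∀ u ∈ H.verts, ∀ v ∈ H.verts,
    Relation.ReflTransGen (fun a b => (a, b) ∈ H.arcs) u v

/-- `HasIDSS D S p` : there are `p` pairwise internally disjoint strong
subgraphs of `D`, each containing `S`. -/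
def HasIDSS {V : Type*} (D : Digr V) (S : Set V) (p : ℕ) : Prop :=
  ∃ f : Fin p → Subdigr D,
    (∀ i, (f i).IsStrong ∧ S ⊆ (f i).verts) ∧
    (∀ i j, i ≠ j → (f i).verts ∩ (f j).verts = S ∧ (f i).arcs ∩ (f j).arcs = ∅)

/-- `κ_S(D)`: the maximum number of pairwise internally disjoint strong
subgraphs of `D` containing `S`. -/
noncomputable def kappaS {V : Type*} (D : Digr V) (S : Set V) : ℕ :=
  sSup {p | HasIDSS D S p}

/-- `κ_k(D)`: the strong subgraph `k`-connectivity of `D`. -/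
noncomputable def kappaK {V : Type*} [Fintype V] (D : Digr V) (k : ℕ) : ℕ :=
  sInf {m | ∃ S : Finset V, S.card = k ∧ kappaS D (↑S : Set V) = m}

/-- The complete biorientation of an undirected graph `G`: each edge `uv` is
replaced by the two arcs `uv` and `vu`. -/
def biorient {V : Type*} (G : SimpleGraph V) : Digr V := ⟨G.Adj⟩

/-- A digraph is strong if every vertex reaches every other vertex. -/
def Digr.IsStrong {V : Type*} (D : Digr V) : Prop :=
  ∀ u v : V, Relation.ReflTransGen D.Adj u v

/-- The vertex connectivity of `G`: the minimum size of a vertex set `T` such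
that `G - T` is disconnected or has at most one vertex. -/
noncomputable def vConn {V : Type*} [Fintype V] (G : SimpleGraph V) : ℕ :=
  sInf {m | ∃ T : Finset V, T.card = m ∧
    (Fintype.card V - T.card ≤ 1 ∨ ¬ (G.induce ((↑T : Set V)ᶜ)).Connected)}


open SimpleGraph Relation


section Aux
variable {V : Type*}

/-- Deleting two vertices from a graph. -/
def del2 (G : SimpleGraph V) (u v : V) : SimpleGraph V where
  Adj a b := G.Adj a b ∧ a ≠ u ∧ a ≠ v ∧ b ≠ u ∧ b ≠ v
  symm := ⟨fun a b h => ⟨h.1.symm, h.2.2.2.1, h.2.2.2.2, h.2.1, h.2.2.1⟩⟩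
  loopless := ⟨fun a h => G.loopless.irrefl a h.1⟩

lemma del2_support {G : SimpleGraph V} {u v : V} :
    ∀ {a b : V} (w : (del2 G u v).Walk a b), a ≠ u → a ≠ v →
      ∀ z ∈ w.support, z ≠ u ∧ z ≠ v := by
  intro a b w
  induction w with
  | nil => intro h1 h2 z hz; simp at hz; subst hz; exact ⟨h1, h2⟩
  | cons h p ih =>
    intro h1 h2 z hz
    rw [Walk.support_cons, List.mem_cons] at hz
    rcases hz with rfl | hz
    · exact ⟨h1, h2⟩
    · exact ih h.2.2.2.1 h.2.2.2.2 z hz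

/-- Extract from a `u`–`v` walk (with `u,v` nonadjacent) a walk in `G - {u,v}`
from a neighbor of `u` to a neighbor of `v`. -/
lemma extract_mid {G : SimpleGraph V} {u v : V} (hne : u ≠ v) (hnadj : ¬ G.Adj u v)
    (w : G.Walk u v) :
    ∃ (a b : V) (w' : (del2 G u v).Walk a b), G.Adj u a ∧ G.Adj b v ∧
      ∀ z ∈ w'.support, z ∈ w.support := by
  classical
  have hp : w.bypass.IsPath := w.bypass_isPath
  have hsub : w.bypass.support ⊆ w.support := w.support_bypass_subset
  -- w.bypass : G.Walk u v, u ≠ v so it is a cons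
  cases hbp : w.bypass with
  | nil => exact (hne rfl).elim
  | @cons _ a _ h p =>
    rw [hbp] at hp hsub
    have hpP : p.IsPath := hp.of_cons
    have hup : u ∉ p.support := ((Walk.cons_isPath_iff h p).mp hp).2
    have hav : a ≠ v := by rintro rfl; exact hnadj h
    -- from the far end
    have hqP : p.reverse.IsPath := hpP.reverse
    cases hq : p.reverse with
    | nil => exact (hav rfl).elim
    | @cons _ b _ h2 q =>
      -- p.reverse : G.Walk v a = cons (h2 : Adj v b) q, q : Walk b a
      rw [hq] at hqP
      have hq2 : q.IsPath := hqP.of_cons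
      have hvq : v ∉ q.support := ((Walk.cons_isPath_iff h2 q).mp hqP).2
      have huq : u ∉ q.support := by
        intro hu
        apply hup
        have : q.support ⊆ p.reverse.support := by rw [hq]; simp [Walk.support_cons]
        have := this hu
        rwa [Walk.support_reverse, List.mem_reverse] at this
      have hqsub : q.support ⊆ p.support := by
        intro z hz
        have : z ∈ p.reverse.support := by rw [hq]; simp [Walk.support_cons]; right; exact hz
        rwa [Walk.support_reverse, List.mem_reverse] at this
      -- transfer q to del2
      have hedges : ∀ e ∈ q.edges, e ∈ (del2 G u v).edgeSet := by
        intro e he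
        induction e using Sym2.ind with
        | _ c d =>
          have hc : c ∈ q.support := q.fst_mem_support_of_mem_edges he
          have hd : d ∈ q.support := q.snd_mem_support_of_mem_edges he
          refine ⟨q.adj_of_mem_edges he, ?_, ?_, ?_, ?_⟩ <;>
            first
            | exact fun hx => huq (hx ▸ hc)
            | exact fun hx => hvq (hx ▸ hc)
            | exact fun hx => huq (hx ▸ hd)
            | exact fun hx => hvq (hx ▸ hd)
      refine ⟨a, b, (q.transfer (del2 G u v) hedges).reverse, h, h2.symm, ?_⟩
      intro z hz
      rw [Walk.support_reverse, List.mem_reverse, Walk.support_transfer] at hz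
      exact hsub (List.mem_cons_of_mem _ (hqsub hz))

end Aux

section Aux2
variable {V : Type*}

lemma rtg_toWalk {G : SimpleGraph V} {P : V → Prop} {u v : V}
    (h : Relation.ReflTransGen (fun a b => G.Adj a b ∧ P a ∧ P b) u v) (hu : P u) :
    ∃ w : G.Walk u v, ∀ z ∈ w.support, P z := by
  induction h with
  | refl => exact ⟨Walk.nil, by simpa using hu⟩
  | tail h1 h2 ih =>
    obtain ⟨w, hw⟩ := ih
    refine ⟨w.concat h2.1, ?_⟩
    intro z hz
    rw [Walk.support_concat] at hz
    rw [List.mem_append] at hz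
    simp only [List.mem_singleton] at hz
    rcases hz with hz | rfl
    · exact hw z hz
    · exact h2.2.2

lemma walk_toRtg {G : SimpleGraph V} {P : V → Prop} :
    ∀ {u v : V} (w : G.Walk u v), (∀ z ∈ w.support, P z) →
      Relation.ReflTransGen (fun a b => G.Adj a b ∧ P a ∧ P b) u v := by
  intro u v w
  induction w with
  | nil => intro; exact .refl
  | @cons a c _ h p ih =>
    intro hsup
    refine Relation.ReflTransGen.head ⟨h, hsup a (by simp), hsup c (by simp [Walk.support_cons, p.start_mem_support])⟩ (ih ?_)
    intro z hz
    exact hsup z (by simp [Walk.support_cons, hz])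

lemma reach_of_induce_reachable {G : SimpleGraph V} {s : Set V} {u v : V}
    (hu : u ∈ s) (hv : v ∈ s) (h : (G.induce s).Reachable ⟨u, hu⟩ ⟨v, hv⟩) :
    Relation.ReflTransGen (fun a b => G.Adj a b ∧ a ∈ s ∧ b ∈ s) u v := by
  obtain ⟨w⟩ := h
  have : ∀ (x y : s) (w : (G.induce s).Walk x y),
      Relation.ReflTransGen (fun a b => G.Adj a b ∧ a ∈ s ∧ b ∈ s) x y := by
    intro x y w
    induction w with
    | nil => exact .refl
    | @cons a c _ h p ih =>
      exact Relation.ReflTransGen.head ⟨h, a.2, c.2⟩ ih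
  exact this _ _ w

lemma induce_reachable_of_rtg {G : SimpleGraph V} {s : Set V} {u v : V}
    (h : Relation.ReflTransGen (fun a b => G.Adj a b ∧ a ∈ s ∧ b ∈ s) u v) (hu : u ∈ s) :
    ∃ hv : v ∈ s, (G.induce s).Reachable ⟨u, hu⟩ ⟨v, hv⟩ := by
  induction h with
  | refl => exact ⟨hu, .refl _⟩
  | tail h1 h2 ih =>
    obtain ⟨hb, hr⟩ := ih
    exact ⟨h2.2.2, hr.trans (SimpleGraph.Adj.reachable (by exact h2.1))⟩

/-- split: a reachability chain inside `W` either hits `T` or avoids `T`. -/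
lemma rtg_split {G : SimpleGraph V} {W : Set V} {T : Set V} {u v : V}
    (h : Relation.ReflTransGen (fun a b => G.Adj a b ∧ a ∈ W ∧ b ∈ W) u v)
    (hu : u ∉ T) :
    (∃ t ∈ T, t ∈ W) ∨
      Relation.ReflTransGen (fun a b => G.Adj a b ∧ a ∉ T ∧ b ∉ T) u v := by
  classical
  induction h with
  | refl => exact Or.inr .refl
  | @tail b c h1 h2 ih =>
    by_cases hcT : c ∈ T
    · exact Or.inl ⟨c, hcT, h2.2.2⟩
    · rcases ih with h | hr
      · exact Or.inl h
      · by_cases hbT : b ∈ T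
        · exact Or.inl ⟨b, hbT, h2.2.1⟩
        · exact Or.inr (hr.tail ⟨h2.1, hbT, hcT⟩)

end Aux2

section Menger
variable {V : Type*}

/-- `S` separates `A` from `B` in `G`: every `A`–`B` walk meets `S`. -/
def MSep (G : SimpleGraph V) (A B S : Finset V) : Prop :=
  ∀ ⦃a b : V⦄, a ∈ A → b ∈ B → ∀ w : G.Walk a b, ∃ s ∈ S, s ∈ w.support

/-- `k` vertex-disjoint `A`–`B` walks in `G`. -/
def MSys (G : SimpleGraph V) (A B : Finset V) (k : ℕ) : Prop :=
  ∃ (a b : Fin k → V) (w : ∀ i, G.Walk (a i) (b i)),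
    (∀ i, a i ∈ A ∧ b i ∈ B) ∧
    ∀ i j, i ≠ j → ∀ x, x ∈ (w i).support → x ∉ (w j).support

/-- Truncate a walk at its first vertex belonging to `X`. -/
lemma truncA {X : Finset V} {G : SimpleGraph V} :
    ∀ {a b : V} (w : G.Walk a b), (∃ s ∈ X, s ∈ w.support) →
      ∃ s, s ∈ X ∧ ∃ w₁ : G.Walk a s, (∀ z ∈ w₁.support, z ∈ w.support) ∧
        (∀ z ∈ w₁.support, z ∈ X → z = s) := by
  classical
  intro a b w
  induction w with
  | nil =>
    rintro ⟨s, hs, hsup⟩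
    simp only [Walk.support_nil, List.mem_singleton] at hsup
    subst hsup
    exact ⟨s, hs, Walk.nil, by simp, by simp⟩
  | @cons a c _ h p ih =>
    intro hex
    by_cases ha : a ∈ X
    · refine ⟨a, ha, Walk.nil, by simp, ?_⟩
      intro z hz _
      simpa using hz
    · obtain ⟨s, hs, hsup⟩ := hex
      have hsp : s ∈ p.support := by
        rw [Walk.support_cons, List.mem_cons] at hsup
        rcases hsup with rfl | hsup
        · exact absurd hs ha
        · exact hsup
      obtain ⟨s', hs', w₁, hsub, honly⟩ := ih ⟨s, hs, hsp⟩
      refine ⟨s', hs', Walk.cons h w₁, ?_, ?_⟩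
      · intro z hz
        rw [Walk.support_cons, List.mem_cons] at hz ⊢
        rcases hz with rfl | hz
        · exact Or.inl rfl
        · exact Or.inr (hsub z hz)
      · intro z hz hzX
        rw [Walk.support_cons, List.mem_cons] at hz
        rcases hz with rfl | hz
        · exact absurd hzX ha
        · exact honly z hz hzX

variable [DecidableEq V]

/-- vertex identification map sending `y` to `x`. -/
def rr (x y : V) (z : V) : V := if z = y then x else z

lemma rr_x {x y : V} (h : x ≠ y) : rr x y x = x := if_neg h
lemma rr_y (x y : V) : rr x y y = x := if_pos rfl

lemma rr_eq_cases {G : SimpleGraph V} {x y : V} (hxy : G.Adj x y) {z z' : V}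
    (h : rr x y z = rr x y z') : z = z' ∨ G.Adj z z' := by
  unfold rr at h
  split_ifs at h with h1 h2 h2
  · exact Or.inl (h1.trans h2.symm)
  · subst h1; subst h; exact Or.inr (hxy.symm)
  · subst h2; subst h; exact Or.inr hxy
  · exact Or.inl h

/-- The contraction of the edge `xy` (merging `y` into `x`). -/
def cgr (G : SimpleGraph V) (x y : V) : SimpleGraph V where
  Adj a b := a ≠ b ∧ ∃ a' b', rr x y a' = a ∧ rr x y b' = b ∧ G.Adj a' b'
  symm := ⟨fun a b h => ⟨h.1.symm, h.2.choose_spec.choose, h.2.choose,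
    h.2.choose_spec.choose_spec.2.1, h.2.choose_spec.choose_spec.1,
    h.2.choose_spec.choose_spec.2.2.symm⟩⟩
  loopless := ⟨fun a h => h.1 rfl⟩

lemma walkProj {G : SimpleGraph V} {x y : V} :
    ∀ {a b : V} (w : G.Walk a b), ∃ w' : (cgr G x y).Walk (rr x y a) (rr x y b),
      ∀ z' ∈ w'.support, ∃ z ∈ w.support, rr x y z = z' := by
  intro a b w
  induction w with
  | nil => exact ⟨Walk.nil, by simp⟩
  | @cons a c _ h p ih =>
    obtain ⟨w', hw'⟩ := ih
    by_cases hac : rr x y a = rr x y c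
    · refine ⟨w'.copy hac.symm rfl, ?_⟩
      intro z' hz'
      rw [Walk.support_copy] at hz'
      obtain ⟨z, hz, hzr⟩ := hw' z' hz'
      exact ⟨z, by simp [Walk.support_cons, hz], hzr⟩
    · refine ⟨Walk.cons (show (cgr G x y).Adj _ _ from ⟨hac, a, c, rfl, rfl, h⟩) w', ?_⟩
      intro z' hz'
      rw [Walk.support_cons, List.mem_cons] at hz'
      rcases hz' with rfl | hz'
      · exact ⟨a, by simp [Walk.support_cons], rfl⟩
      · obtain ⟨z, hz, hzr⟩ := hw' z' hz'
        exact ⟨z, by simp [Walk.support_cons, hz], hzr⟩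

lemma conn2 {G : SimpleGraph V} {x y : V} (hxy : G.Adj x y) {a₀ a₁ : V}
    (h : rr x y a₀ = rr x y a₁) :
    ∃ q : G.Walk a₀ a₁, ∀ z ∈ q.support, z = a₀ ∨ z = a₁ := by
  rcases rr_eq_cases hxy h with rfl | hadj
  · exact ⟨Walk.nil, by simp⟩
  · exact ⟨Walk.cons hadj Walk.nil, by intro z hz; simpa [Walk.support_cons] using hz⟩

lemma walkLift {G : SimpleGraph V} {x y : V} (hxy : G.Adj x y) :
    ∀ {a b : V} (w : (cgr G x y).Walk a b) (a₀ b₀ : V), rr x y a₀ = a → rr x y b₀ = b →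
      ∃ w₀ : G.Walk a₀ b₀, ∀ z ∈ w₀.support, rr x y z ∈ w.support := by
  intro a b w
  induction w with
  | nil =>
    intro a₀ b₀ ha hb
    obtain ⟨q, hq⟩ := conn2 hxy (ha.trans hb.symm)
    refine ⟨q, ?_⟩
    intro z hz
    rcases hq z hz with rfl | rfl <;> simp [ha, hb]
  | @cons a c _ h p ih =>
    intro a₀ b₀ ha hb
    obtain ⟨hne, a', c', ha', hc', hadj⟩ := id h
    obtain ⟨w₁, hw₁⟩ := ih c' b₀ hc' hb
    obtain ⟨q, hq⟩ := conn2 hxy (ha.trans ha'.symm)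
    refine ⟨q.append (Walk.cons hadj w₁), ?_⟩
    intro z hz
    rw [Walk.mem_support_append_iff] at hz
    simp only [Walk.support_cons, List.mem_cons]
    rcases hz with hz | hz
    · rcases hq z hz with rfl | rfl
      · exact Or.inl ha
      · exact Or.inl ha'
    · rw [Walk.support_cons, List.mem_cons] at hz
      rcases hz with rfl | hz
      · exact Or.inl ha'
      · exact Or.inr (hw₁ z hz)

lemma cgr_ecard [Fintype V] {G : SimpleGraph V} {x y : V} (hxy : G.Adj x y) :
    (cgr G x y).edgeSet.ncard < G.edgeSet.ncard := by
  classical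
  have hfin : G.edgeSet.Finite := Set.toFinite _
  have hsub : (cgr G x y).edgeSet ⊆ (Sym2.map (rr x y)) '' (G.edgeSet \ {s(x, y)}) := by
    intro e he
    induction e using Sym2.ind with
    | _ a b =>
      rw [SimpleGraph.mem_edgeSet] at he
      obtain ⟨hne, a', b', ha, hb, hadj⟩ := he
      refine ⟨s(a', b'), ⟨G.mem_edgeSet.mpr hadj, ?_⟩, by simp [Sym2.map_pair_eq, ha, hb]⟩
      intro hmem
      rw [Set.mem_singleton_iff, Sym2.eq_iff] at hmem
      rcases hmem with ⟨rfl, rfl⟩ | ⟨rfl, rfl⟩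
      · exact hne (by rw [← ha, ← hb, rr_x hxy.ne, rr_y])
      · exact hne (by rw [← ha, ← hb, rr_x hxy.ne, rr_y])
  have h1 : ((Sym2.map (rr x y)) '' (G.edgeSet \ {s(x, y)})).ncard ≤ (G.edgeSet \ {s(x, y)}).ncard :=
    Set.ncard_image_le (hfin.subset Set.diff_subset)
  have h2 : (G.edgeSet \ {s(x, y)}).ncard < G.edgeSet.ncard :=
    Set.ncard_diff_singleton_lt_of_mem (G.mem_edgeSet.mpr hxy) hfin
  exact lt_of_le_of_lt
    (le_trans (Set.ncard_le_ncard hsub ((hfin.subset Set.diff_subset).image _)) h1) h2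



lemma not_end_mem_takeUntil [DecidableEq V] {G : SimpleGraph V} {a s z : V} {p : G.Walk a s}
    (hp : p.IsPath) (hz : z ∈ p.support) (hzs : z ≠ s) :
    s ∉ (p.takeUntil z hz).support := by
  intro hs
  have hnd : ((p.takeUntil z hz).support ++ (p.dropUntil z hz).support.tail).Nodup := by
    rw [← Walk.support_append, Walk.take_spec]; exact hp.support_nodup
  have hs2 : s ∈ (p.dropUntil z hz).support := (p.dropUntil z hz).end_mem_support
  have hs3 : s ∈ (p.dropUntil z hz).support.tail := by
    rw [(p.dropUntil z hz).support_eq_cons, List.mem_cons] at hs2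
    rcases hs2 with h | h
    · exact absurd h.symm hzs
    · exact h
  exact (List.disjoint_of_nodup_append hnd) hs hs3

lemma not_start_mem_dropUntil [DecidableEq V] {G : SimpleGraph V} {t b z : V} {p : G.Walk t b}
    (hp : p.IsPath) (hz : z ∈ p.support) (hzt : z ≠ t) :
    t ∉ (p.dropUntil z hz).support := by
  intro ht
  have hnd : ((p.takeUntil z hz).support ++ (p.dropUntil z hz).support.tail).Nodup := by
    rw [← Walk.support_append, Walk.take_spec]; exact hp.support_nodup
  have ht1 : t ∈ (p.takeUntil z hz).support := (p.takeUntil z hz).start_mem_support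
  have ht3 : t ∈ (p.dropUntil z hz).support.tail := by
    rw [(p.dropUntil z hz).support_eq_cons, List.mem_cons] at ht
    rcases ht with h | h
    · exact absurd h hzt.symm
    · exact h
  exact (List.disjoint_of_nodup_append hnd) ht1 ht3

lemma menger_base {G : SimpleGraph V} (hG : G.edgeSet = ∅) {A B : Finset V} {k : ℕ}
    (hsep : ∀ S : Finset V, MSep G A B S → k ≤ S.card) : MSys G A B k := by
  classical
  have hnil : ∀ {a b : V} (w : G.Walk a b), a = b := by
    intro a b w
    cases w with
    | nil => rfl
    | cons h p => exact absurd (G.mem_edgeSet.mpr h) (by simp [hG])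
  have hAB : MSep G A B (A ∩ B) := by
    intro a b ha hb w
    have hab := hnil w
    subst hab
    exact ⟨a, Finset.mem_inter.mpr ⟨ha, hb⟩, w.start_mem_support⟩
  have hk : k ≤ (A ∩ B).card := hsep _ hAB
  obtain ⟨t, hts, htc⟩ := Finset.exists_subset_card_eq hk
  have hct : Fintype.card t = k := by rw [Fintype.card_coe, htc]
  let e : Fin k ≃ t := (Fintype.equivFinOfCardEq hct).symm
  refine ⟨fun i => (e i : V), fun i => (e i : V), fun i => Walk.nil, ?_, ?_⟩
  · intro i
    have := hts (e i).2
    rw [Finset.mem_inter] at this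
    exact this
  · intro i j hij z hz hz'
    simp only [Walk.support_nil, List.mem_singleton] at hz hz'
    exact hij (e.injective (Subtype.ext (hz ▸ hz'.symm ▸ rfl)))



theorem menger {V : Type*} [Fintype V] [DecidableEq V] :
    ∀ (n : ℕ) (G : SimpleGraph V) (A B : Finset V) (k : ℕ),
      G.edgeSet.ncard ≤ n →
      (∀ S : Finset V, MSep G A B S → k ≤ S.card) → MSys G A B k := by
  intro n
  induction n with
  | zero =>
    intro G A B k hn hsep
    exact menger_base ((Set.ncard_eq_zero (Set.toFinite _)).mp (Nat.le_zero.mp hn)) hsep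
  | succ n ih =>
    intro G A B k hn hsep
    by_cases hE : G.edgeSet = ∅
    · exact menger_base hE hsep
    obtain ⟨x, y, hxy⟩ : ∃ x y, G.Adj x y := by
      obtain ⟨e, he⟩ := Set.nonempty_iff_ne_empty.mpr hE
      induction e using Sym2.ind with
      | _ x y => exact ⟨x, y, he⟩
    by_cases hc : ∀ S' : Finset V,
        MSep (cgr G x y) (A.image (rr x y)) (B.image (rr x y)) S' → k ≤ S'.card
    · -- contraction has no small separator: lift a path system
      have hcard : (cgr G x y).edgeSet.ncard ≤ n := by
        have := cgr_ecard hxy; omega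
      obtain ⟨a', b', w', hAB', hdisj'⟩ := ih (cgr G x y) _ _ k hcard hc
      have hA : ∀ i, ∃ a₀, a₀ ∈ A ∧ rr x y a₀ = a' i := by
        intro i
        have := (hAB' i).1
        rw [Finset.mem_image] at this
        obtain ⟨a₀, h1, h2⟩ := this
        exact ⟨a₀, h1, h2⟩
      have hB : ∀ i, ∃ b₀, b₀ ∈ B ∧ rr x y b₀ = b' i := by
        intro i
        have := (hAB' i).2
        rw [Finset.mem_image] at this
        obtain ⟨b₀, h1, h2⟩ := this
        exact ⟨b₀, h1, h2⟩
      choose a₀ ha₀A ha₀ using hA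
      choose b₀ hb₀B hb₀ using hB
      have hw : ∀ i, ∃ w₀ : G.Walk (a₀ i) (b₀ i),
          ∀ z ∈ w₀.support, rr x y z ∈ (w' i).support :=
        fun i => walkLift hxy (w' i) _ _ (ha₀ i) (hb₀ i)
      choose w₀ hw₀ using hw
      refine ⟨a₀, b₀, w₀, fun i => ⟨ha₀A i, hb₀B i⟩, ?_⟩
      intro i j hij z hz hz'
      exact hdisj' i j hij _ (hw₀ i z hz) (hw₀ j z hz')
    · push_neg at hc
      obtain ⟨S', hS'sep, hS'lt⟩ := hc
      have hproj : ∀ (a b : V), a ∈ A → b ∈ B → ∀ w : G.Walk a b,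
          ∃ s ∈ S', ∃ z ∈ w.support, rr x y z = s := by
        intro a b ha hb w
        obtain ⟨w', hw'⟩ := walkProj (x := x) (y := y) w
        obtain ⟨s, hsS, hssup⟩ := hS'sep (Finset.mem_image_of_mem _ ha)
          (Finset.mem_image_of_mem _ hb) w'
        obtain ⟨z, hz, hzr⟩ := hw' s hssup
        exact ⟨s, hsS, z, hz, hzr⟩
      have hxS : x ∈ S' := by
        by_contra hxS
        have hS : MSep G A B S' := by
          intro a b ha hb w
          obtain ⟨s, hsS, z, hz, hzr⟩ := hproj a b ha hb w
          have hzz : z = s := by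
            unfold rr at hzr
            split_ifs at hzr with h
            · exact absurd (hzr ▸ hsS) hxS
            · exact hzr
          exact ⟨s, hsS, hzz ▸ hz⟩
        exact absurd (hsep S' hS) (by omega)
      set X : Finset V := (S'.erase x) ∪ {x, y} with hX
      have hxX : x ∈ X := by simp [hX]
      have hyX : y ∈ X := by simp [hX]
      have hXsep : MSep G A B X := by
        intro a b ha hb w
        obtain ⟨s, hsS, z, hz, hzr⟩ := hproj a b ha hb w
        by_cases hzy : z = y
        · exact ⟨y, hyX, hzy ▸ hz⟩
        · have hzz : rr x y z = z := if_neg hzy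
          rw [hzz] at hzr
          subst hzr
          by_cases hzx : z = x
          · exact ⟨z, by simp [hX, hzx], hz⟩
          · refine ⟨z, ?_, hz⟩
            rw [hX, Finset.mem_union]
            exact Or.inl (Finset.mem_erase.mpr ⟨hzx, hsS⟩)
      have hkX : k ≤ X.card := hsep X hXsep
      have hXk : X.card = k := by
        have h1 : X.card ≤ (S'.erase x).card + ({x, y} : Finset V).card :=
          Finset.card_union_le _ _
        have h2 : (S'.erase x).card = S'.card - 1 := Finset.card_erase_of_mem hxS
        have h3 : ({x, y} : Finset V).card ≤ 2 := Finset.card_insert_le _ _ |>.trans (by simp)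
        have h4 : 1 ≤ S'.card := Finset.card_pos.mpr ⟨x, hxS⟩
        omega
      set Gd := G.deleteEdges {s(x, y)} with hGd
      have hGdE : Gd.edgeSet = G.edgeSet \ {s(x, y)} := by
        rw [hGd, edgeSet_deleteEdges]
      have hGdcard : Gd.edgeSet.ncard ≤ n := by
        rw [hGdE]
        have := Set.ncard_diff_singleton_lt_of_mem (G.mem_edgeSet.mpr hxy) (Set.toFinite _)
        omega
      have hGdle : ∀ {a b : V} (w : Gd.Walk a b), ∀ e ∈ w.edges, e ∈ G.edgeSet := by
        intro a b w e he
        have := w.edges_subset_edgeSet he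
        rw [hGdE] at this
        exact this.1
      have htrans : ∀ {a s : V} (w₁ : G.Walk a s), (∀ z ∈ w₁.support, z ∈ X → z = s) →
          ∀ e ∈ w₁.edges, e ∈ Gd.edgeSet := by
        intro a s w₁ honly e he
        rw [hGdE]
        refine ⟨w₁.edges_subset_edgeSet he, ?_⟩
        intro hmem
        rw [Set.mem_singleton_iff] at hmem
        subst hmem
        have hx1 : x ∈ w₁.support := w₁.fst_mem_support_of_mem_edges he
        have hy1 : y ∈ w₁.support := w₁.snd_mem_support_of_mem_edges he
        have e1 := honly x hx1 hxX
        have e2 := honly y hy1 hyX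
        exact hxy.ne (e1.trans e2.symm)
      have hsepA : ∀ T : Finset V, MSep Gd A X T → k ≤ T.card := by
        intro T hT
        apply hsep
        intro a b ha hb w
        obtain ⟨s₀, hs₀, w₁, hsub, honly⟩ := truncA w (hXsep ha hb w)
        obtain ⟨t, htT, htsup⟩ := hT ha hs₀ (w₁.transfer Gd (htrans w₁ honly))
        rw [Walk.support_transfer] at htsup
        exact ⟨t, htT, hsub t htsup⟩
      have hsepB : ∀ T : Finset V, MSep Gd X B T → k ≤ T.card := by
        intro T hT
        apply hsep
        intro a b ha hb w
        have hex : ∃ s ∈ X, s ∈ w.reverse.support := by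
          obtain ⟨s, h1, h2⟩ := hXsep ha hb w
          exact ⟨s, h1, by rwa [Walk.support_reverse, List.mem_reverse]⟩
        obtain ⟨s₀, hs₀, w₁, hsub, honly⟩ := truncA w.reverse hex
        obtain ⟨t, htT, htsup⟩ := hT hs₀ hb ((w₁.transfer Gd (htrans w₁ honly)).reverse)
        rw [Walk.support_reverse, List.mem_reverse, Walk.support_transfer] at htsup
        have := hsub t htsup
        rw [Walk.support_reverse, List.mem_reverse] at this
        exact ⟨t, htT, this⟩
      obtain ⟨pa, ps, pw, hP1, hPdisj⟩ := ih Gd A X k hGdcard hsepA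
      obtain ⟨qs, qb, qw, hQ1, hQdisj⟩ := ih Gd X B k hGdcard hsepB
      -- truncate the A-side walks at their first X-vertex and simplify to paths
      have hPex : ∀ i, ∃ s, s ∈ X ∧ ∃ w₁ : Gd.Walk (pa i) s,
          (∀ z ∈ w₁.support, z ∈ (pw i).support) ∧ (∀ z ∈ w₁.support, z ∈ X → z = s) :=
        fun i => truncA (pw i) ⟨ps i, (hP1 i).2, (pw i).end_mem_support⟩
      choose s' hs'X pw₁ hPsub hPonly using hPex
      set P' : ∀ i, Gd.Walk (pa i) (s' i) := fun i => (pw₁ i).bypass with hP'def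
      have hP'path : ∀ i, (P' i).IsPath := fun i => (pw₁ i).bypass_isPath
      have hP'sub : ∀ i, ∀ z ∈ (P' i).support, z ∈ (pw i).support :=
        fun i z hz => hPsub i z ((pw₁ i).support_bypass_subset hz)
      have hP'only : ∀ i, ∀ z ∈ (P' i).support, z ∈ X → z = s' i :=
        fun i z hz => hPonly i z ((pw₁ i).support_bypass_subset hz)
      -- truncate the B-side walks from the back
      have hQex : ∀ j, ∃ t, t ∈ X ∧ ∃ w₁ : Gd.Walk (qb j) t,
          (∀ z ∈ w₁.support, z ∈ (qw j).reverse.support) ∧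
          (∀ z ∈ w₁.support, z ∈ X → z = t) :=
        fun j => truncA (qw j).reverse ⟨qs j, (hQ1 j).1,
          by rw [Walk.support_reverse, List.mem_reverse]; exact (qw j).start_mem_support⟩
      choose t' ht'X qw₁ hQsub0 hQonly0 using hQex
      set Q' : ∀ j, Gd.Walk (t' j) (qb j) := fun j => (qw₁ j).bypass.reverse with hQ'def
      have hQ'path : ∀ j, (Q' j).IsPath := fun j => ((qw₁ j).bypass_isPath).reverse
      have hQ'memrev : ∀ j, ∀ z ∈ (Q' j).support, z ∈ (qw₁ j).support := by
        intro j z hz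
        rw [hQ'def] at hz
        rw [Walk.support_reverse, List.mem_reverse] at hz
        exact (qw₁ j).support_bypass_subset hz
      have hQ'sub : ∀ j, ∀ z ∈ (Q' j).support, z ∈ (qw j).support := by
        intro j z hz
        have := hQsub0 j z (hQ'memrev j z hz)
        rwa [Walk.support_reverse, List.mem_reverse] at this
      have hQ'only : ∀ j, ∀ z ∈ (Q' j).support, z ∈ X → z = t' j :=
        fun j z hz => hQonly0 j z (hQ'memrev j z hz)
      -- endpoint injectivity and coverage
      have hs'inj : Function.Injective s' := by
        intro i j hij
        by_contra hne
        have h1 : s' i ∈ (pw i).support := hP'sub i _ ((P' i).end_mem_support)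
        have h2 : s' i ∈ (pw j).support := by
          rw [hij]; exact hP'sub j _ ((P' j).end_mem_support)
        exact hPdisj i j hne _ h1 h2
      have ht'inj : Function.Injective t' := by
        intro i j hij
        by_contra hne
        have h1 : t' i ∈ (qw i).support := hQ'sub i _ ((Q' i).start_mem_support)
        have h2 : t' i ∈ (qw j).support := by
          rw [hij]; exact hQ'sub j _ ((Q' j).start_mem_support)
        exact hQdisj i j hne _ h1 h2
      have hTB : Finset.image t' Finset.univ = X := by
        apply Finset.eq_of_subset_of_card_le
        · intro z hz
          obtain ⟨i, _, rfl⟩ := Finset.mem_image.mp hz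
          exact ht'X i
        · rw [Finset.card_image_of_injective _ ht'inj, Finset.card_univ, Fintype.card_fin, hXk]
      have hσex : ∀ i, ∃ j, t' j = s' i := by
        intro i
        have : s' i ∈ Finset.image t' Finset.univ := by rw [hTB]; exact hs'X i
        obtain ⟨j, _, hj⟩ := Finset.mem_image.mp this
        exact ⟨j, hj⟩
      choose σ hσ using hσex
      have hσinj : Function.Injective σ := fun i i' h =>
        hs'inj (by rw [← hσ i, ← hσ i', h])
      set W : ∀ i, Gd.Walk (pa i) (qb (σ i)) :=
        fun i => (P' i).append ((Q' (σ i)).copy (hσ i) rfl) with hWdef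
      have hWmem : ∀ i, ∀ z ∈ (W i).support,
          z ∈ (P' i).support ∨ z ∈ (Q' (σ i)).support := by
        intro i z hz
        rw [hWdef] at hz
        rw [Walk.mem_support_append_iff] at hz
        rcases hz with hz | hz
        · exact Or.inl hz
        · rw [Walk.support_copy] at hz
          exact Or.inr hz
      have hcross : ∀ i j z, z ∈ (P' i).support → z ∈ (Q' j).support →
          z = s' i ∧ z = t' j := by
        intro i j z hzP hzQ
        by_cases hzX : z ∈ X
        · exact ⟨hP'only i z hzP hzX, hQ'only j z hzQ hzX⟩
        · exfalso
          have hzs : z ≠ s' i := fun h => hzX (h ▸ hs'X i)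
          have hzt : z ≠ t' j := fun h => hzX (h ▸ ht'X j)
          set wa := (P' i).takeUntil z hzP with hwa
          set wb := (Q' j).dropUntil z hzQ with hwb
          have hsa : s' i ∉ wa.support := not_end_mem_takeUntil (hP'path i) hzP hzs
          have htb : t' j ∉ wb.support := not_start_mem_dropUntil (hQ'path j) hzQ hzt
          have hwaX : ∀ z' ∈ wa.support, z' ∉ X := by
            intro z' hz' hz'X
            have hz'e : z' = s' i :=
              hP'only i z' ((P' i).support_takeUntil_subset hzP hz') hz'X
            exact hsa (hz'e ▸ hz')
          have hwbX : ∀ z' ∈ wb.support, z' ∉ X := by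
            intro z' hz' hz'X
            have hz'e : z' = t' j :=
              hQ'only j z' ((Q' j).support_dropUntil_subset hzQ hz') hz'X
            exact htb (hz'e ▸ hz')
          have hGle : ∀ e ∈ (wa.append wb).edges, e ∈ G.edgeSet :=
            fun e he => hGdle _ e he
          obtain ⟨s₀, hs₀X, hs₀sup⟩ := hXsep (hP1 i).1 (hQ1 j).2
            ((wa.append wb).transfer G hGle)
          rw [Walk.support_transfer, Walk.mem_support_append_iff] at hs₀sup
          rcases hs₀sup with h | h
          · exact hwaX _ h hs₀X
          · exact hwbX _ h hs₀X
      refine ⟨pa, fun i => qb (σ i),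
        fun i => (W i).transfer G (fun e he => hGdle _ e he),
        fun i => ⟨(hP1 i).1, (hQ1 (σ i)).2⟩, ?_⟩
      intro i j hij z hz hz'
      rw [Walk.support_transfer] at hz hz'
      rcases hWmem i z hz with hzi | hzi <;> rcases hWmem j z hz' with hzj | hzj
      · exact hPdisj i j hij z (hP'sub i z hzi) (hP'sub j z hzj)
      · obtain ⟨e1, e2⟩ := hcross i (σ j) z hzi hzj
        rw [hσ j] at e2
        exact hij (hs'inj (e1.symm.trans e2))
      · obtain ⟨e1, e2⟩ := hcross j (σ i) z hzj hzi
        rw [hσ i] at e2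
        exact hij (hs'inj (e2.symm.trans e1))
      · exact hQdisj (σ i) (σ j) (fun h => hij (hσinj h)) z
          (hQ'sub (σ i) z hzi) (hQ'sub (σ j) z hzj)

end Menger
section Bridge
variable {V : Type*}

lemma hasIDSS_zero {D : Digr V} {S : Set V} : HasIDSS D S 0 :=
  ⟨fun i => i.elim0, fun i => i.elim0, fun i => i.elim0⟩

/-- reach along the edges of a walk, in both directions -/
lemma walk_reach {G : SimpleGraph V} {R : V → V → Prop} :
    ∀ {c d : V} (w : G.Walk c d), (∀ p q, s(p, q) ∈ w.edges → R p q) →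
      ∀ z ∈ w.support, Relation.ReflTransGen R c z ∧ Relation.ReflTransGen R z c := by
  intro c d w
  induction w with
  | nil =>
    intro _ z hz
    simp only [Walk.support_nil, List.mem_singleton] at hz
    subst hz; exact ⟨.refl, .refl⟩
  | @cons a c' _ h p ih =>
    intro hR z hz
    have hac : R a c' := hR a c' (by simp [Walk.edges_cons])
    have hca : R c' a := hR c' a (by rw [Sym2.eq_swap]; simp [Walk.edges_cons])
    have hRp : ∀ p' q', s(p', q') ∈ p.edges → R p' q' := by
      intro p' q' hmem
      exact hR p' q' (by simp [Walk.edges_cons, hmem])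
    rw [Walk.support_cons, List.mem_cons] at hz
    rcases hz with rfl | hz
    · exact ⟨.refl, .refl⟩
    · obtain ⟨h1, h2⟩ := ih hRp z hz
      exact ⟨.head hac h1, h2.tail hca⟩

/-- The subdigraph of `biorient G` generated by a `u`-`v` connector walk. -/
def wSub {G : SimpleGraph V} {u v a b : V} (hua : G.Adj u a) (hbv : G.Adj b v)
    (w : G.Walk a b) : Subdigr (biorient G) where
  verts := {u, v} ∪ {z | z ∈ w.support}
  arcs := {(u, a), (a, u), (b, v), (v, b)} ∪ {p : V × V | s(p.1, p.2) ∈ w.edges}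
  arcs_adj := by
    rintro ⟨p, q⟩ hpq
    rcases hpq with hpq | hpq
    · simp only [Set.mem_insert_iff, Set.mem_singleton_iff, Prod.mk.injEq] at hpq
      rcases hpq with ⟨rfl, rfl⟩ | ⟨rfl, rfl⟩ | ⟨rfl, rfl⟩ | ⟨rfl, rfl⟩
      · exact hua
      · exact hua.symm
      · exact hbv
      · exact hbv.symm
    · exact w.adj_of_mem_edges hpq
  arcs_verts := by
    rintro ⟨p, q⟩ hpq
    rcases hpq with hpq | hpq
    · simp only [Set.mem_insert_iff, Set.mem_singleton_iff, Prod.mk.injEq] at hpq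
      rcases hpq with ⟨rfl, rfl⟩ | ⟨rfl, rfl⟩ | ⟨rfl, rfl⟩ | ⟨rfl, rfl⟩
      · exact ⟨Or.inl (Or.inl rfl), Or.inr w.start_mem_support⟩
      · exact ⟨Or.inr w.start_mem_support, Or.inl (Or.inl rfl)⟩
      · exact ⟨Or.inr w.end_mem_support, Or.inl (Or.inr rfl)⟩
      · exact ⟨Or.inl (Or.inr rfl), Or.inr w.end_mem_support⟩
    · exact ⟨Or.inr (w.fst_mem_support_of_mem_edges hpq),
        Or.inr (w.snd_mem_support_of_mem_edges hpq)⟩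

lemma wSub_strong {G : SimpleGraph V} {u v a b : V} (hua : G.Adj u a) (hbv : G.Adj b v)
    (w : G.Walk a b) : (wSub hua hbv w).IsStrong := by
  set D := wSub hua hbv w with hD
  set R : V → V → Prop := fun p q => (p, q) ∈ D.arcs with hR
  have hedge : ∀ p q, s(p, q) ∈ w.edges → R p q := fun p q h => Or.inr h
  have hw := walk_reach (R := R) w hedge
  have hu_a : R u a := Or.inl (by simp)
  have ha_u : R a u := Or.inl (by simp)
  have hb_v : R b v := Or.inl (by simp)
  have hv_b : R v b := Or.inl (by simp)
  have hfrom_u : ∀ z ∈ D.verts, Relation.ReflTransGen R u z := by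
    rintro z (hz | hz)
    · rcases hz with rfl | rfl
      · exact .refl
      · exact Relation.ReflTransGen.head hu_a ((hw b w.end_mem_support).1.tail hb_v)
    · exact Relation.ReflTransGen.head hu_a (hw z hz).1
  have hto_u : ∀ z ∈ D.verts, Relation.ReflTransGen R z u := by
    rintro z (hz | hz)
    · rcases hz with rfl | rfl
      · exact .refl
      · exact Relation.ReflTransGen.head hv_b ((hw b w.end_mem_support).2.tail ha_u)
    · exact (hw z hz).2.tail ha_u
  intro z1 h1 z2 h2
  exact (hto_u z1 h1).trans (hfrom_u z2 h2)

/-- the key exclusion: the arcs `(u,v)` and `(v,u)` do not occur in a connector's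
subdigraph, provided its walk avoids `u` and `v`. -/
lemma wSub_arc_ne {G : SimpleGraph V} {u v a b : V} (hua : G.Adj u a) (hbv : G.Adj b v)
    (w : G.Walk a b) (hav : ∀ z ∈ w.support, z ≠ u ∧ z ≠ v) (huv : u ≠ v) :
    (u, v) ∉ (wSub hua hbv w).arcs ∧ (v, u) ∉ (wSub hua hbv w).arcs := by
  have ha := hav a w.start_mem_support
  have hb := hav b w.end_mem_support
  constructor
  · rintro (h | h)
    · simp only [Set.mem_insert_iff, Set.mem_singleton_iff, Prod.mk.injEq] at h
      rcases h with ⟨h1, h2⟩ | ⟨h1, h2⟩ | ⟨h1, h2⟩ | ⟨h1, h2⟩ <;>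
        first
          | exact ha.1 h2.symm | exact ha.2 h2.symm | exact hb.1 h1.symm | exact hb.2 h1.symm
          | exact ha.1 h1.symm | exact ha.2 h1.symm | exact hb.1 h2.symm | exact hb.2 h2.symm
          | exact huv h2.symm | exact huv h1 | exact huv h2 | exact huv h1.symm
    · exact (hav u (w.fst_mem_support_of_mem_edges h)).1 rfl
  · rintro (h | h)
    · simp only [Set.mem_insert_iff, Set.mem_singleton_iff, Prod.mk.injEq] at h
      rcases h with ⟨h1, h2⟩ | ⟨h1, h2⟩ | ⟨h1, h2⟩ | ⟨h1, h2⟩ <;>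
        first
          | exact ha.1 h2.symm | exact ha.2 h2.symm | exact hb.1 h1.symm | exact hb.2 h1.symm
          | exact ha.1 h1.symm | exact ha.2 h1.symm | exact hb.1 h2.symm | exact hb.2 h2.symm
          | exact huv h2.symm | exact huv h1 | exact huv h2 | exact huv h1.symm
    · exact (hav v (w.fst_mem_support_of_mem_edges h)).2 rfl

end Bridge

section Bridge2
variable {V : Type*}

def eSub {G : SimpleGraph V} {u v : V} (h : G.Adj u v) : Subdigr (biorient G) where
  verts := {u, v}
  arcs := {(u, v), (v, u)}
  arcs_adj := by
    rintro ⟨p, q⟩ hpq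
    simp only [Set.mem_insert_iff, Set.mem_singleton_iff, Prod.mk.injEq] at hpq
    rcases hpq with ⟨rfl, rfl⟩ | ⟨rfl, rfl⟩
    · exact h
    · exact h.symm
  arcs_verts := by
    rintro ⟨p, q⟩ hpq
    simp only [Set.mem_insert_iff, Set.mem_singleton_iff, Prod.mk.injEq] at hpq
    rcases hpq with ⟨rfl, rfl⟩ | ⟨rfl, rfl⟩
    · exact ⟨Or.inl rfl, Or.inr rfl⟩
    · exact ⟨Or.inr rfl, Or.inl rfl⟩

lemma eSub_strong {G : SimpleGraph V} {u v : V} (h : G.Adj u v) : (eSub h).IsStrong := by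
  intro z1 h1 z2 h2
  have huv : Relation.ReflTransGen (fun a b => (a, b) ∈ (eSub h).arcs) u v :=
    Relation.ReflTransGen.single (Or.inl rfl)
  have hvu : Relation.ReflTransGen (fun a b => (a, b) ∈ (eSub h).arcs) v u :=
    Relation.ReflTransGen.single (Or.inr rfl)
  simp only [eSub, Set.mem_insert_iff, Set.mem_singleton_iff] at h1 h2
  rcases h1 with rfl | rfl <;> rcases h2 with rfl | rfl
  · exact .refl
  · exact huv
  · exact hvu
  · exact .refl

lemma wSub_disj {G : SimpleGraph V} {u v : V} (huv : u ≠ v) {a1 b1 a2 b2 : V}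
    (h1a : G.Adj u a1) (h1b : G.Adj b1 v) (w1 : G.Walk a1 b1)
    (h2a : G.Adj u a2) (h2b : G.Adj b2 v) (w2 : G.Walk a2 b2)
    (hav1 : ∀ z ∈ w1.support, z ≠ u ∧ z ≠ v) (hav2 : ∀ z ∈ w2.support, z ≠ u ∧ z ≠ v)
    (hd : ∀ z, z ∈ w1.support → z ∉ w2.support) :
    (wSub h1a h1b w1).verts ∩ (wSub h2a h2b w2).verts = {u, v} ∧
      (wSub h1a h1b w1).arcs ∩ (wSub h2a h2b w2).arcs = ∅ := by
  have hverts : (wSub h1a h1b w1).verts ∩ (wSub h2a h2b w2).verts = {u, v} := by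
    apply Set.eq_of_subset_of_subset
    · rintro z ⟨hzi, hzj⟩
      rcases hzi with hz | hz
      · exact hz
      · rcases hzj with hz' | hz'
        · exact hz'
        · exact absurd hz' (hd z hz)
    · exact fun z hz => ⟨Or.inl hz, Or.inl hz⟩
  refine ⟨hverts, ?_⟩
  apply Set.eq_empty_iff_forall_notMem.mpr
  rintro ⟨p, q⟩ ⟨hpi, hpj⟩
  have hv1 := (wSub h1a h1b w1).arcs_verts _ hpi
  have hv2 := (wSub h2a h2b w2).arcs_verts _ hpj
  have hp_uv : p = u ∨ p = v := by
    have : p ∈ ({u, v} : Set V) := hverts ▸ Set.mem_inter hv1.1 hv2.1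
    simpa using this
  have hq_uv : q = u ∨ q = v := by
    have : q ∈ ({u, v} : Set V) := hverts ▸ Set.mem_inter hv1.2 hv2.2
    simpa using this
  have hadjpq : G.Adj p q := (wSub h1a h1b w1).arcs_adj _ hpi
  rcases hp_uv with rfl | rfl <;> rcases hq_uv with rfl | rfl
  · exact G.loopless.irrefl _ hadjpq
  · exact (wSub_arc_ne h1a h1b w1 hav1 huv).1 hpi
  · exact (wSub_arc_ne h1a h1b w1 hav1 huv).2 hpi
  · exact G.loopless.irrefl _ hadjpq

lemma wSub_eSub_disj {G : SimpleGraph V} {u v : V} (huv : G.Adj u v) {a b : V}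
    (ha : G.Adj u a) (hb : G.Adj b v) (w : G.Walk a b)
    (hav : ∀ z ∈ w.support, z ≠ u ∧ z ≠ v) :
    (wSub ha hb w).verts ∩ (eSub huv).verts = {u, v} ∧
      (wSub ha hb w).arcs ∩ (eSub huv).arcs = ∅ := by
  constructor
  · apply Set.eq_of_subset_of_subset
    · rintro z ⟨_, hzj⟩
      exact hzj
    · exact fun z hz => ⟨Or.inl hz, hz⟩
  · apply Set.eq_empty_iff_forall_notMem.mpr
    rintro ⟨p, q⟩ ⟨hpi, hpj⟩
    simp only [eSub, Set.mem_insert_iff, Set.mem_singleton_iff, Prod.mk.injEq] at hpj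
    rcases hpj with ⟨rfl, rfl⟩ | ⟨rfl, rfl⟩
    · exact (wSub_arc_ne ha hb w hav huv.ne).1 hpi
    · exact (wSub_arc_ne ha hb w hav huv.ne).2 hpi

lemma buildIDSS {G : SimpleGraph V} {u v : V} (huv : u ≠ v) {k : ℕ}
    {a b : Fin k → V} (w : ∀ i, G.Walk (a i) (b i))
    (hadj : ∀ i, G.Adj u (a i) ∧ G.Adj (b i) v)
    (havoid : ∀ i, ∀ z ∈ (w i).support, z ≠ u ∧ z ≠ v)
    (hdisj : ∀ i j, i ≠ j → ∀ z, z ∈ (w i).support → z ∉ (w j).support) :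
    HasIDSS (biorient G) {u, v} k := by
  refine ⟨fun i => wSub (hadj i).1 (hadj i).2 (w i), ?_, ?_⟩
  · intro i
    refine ⟨wSub_strong _ _ _, ?_⟩
    intro z hz
    simp only [Set.mem_insert_iff, Set.mem_singleton_iff] at hz
    rcases hz with rfl | rfl
    · exact Or.inl (Or.inl rfl)
    · exact Or.inl (Or.inr rfl)
  · intro i j hij
    exact wSub_disj huv _ _ (w i) _ _ (w j) (havoid i) (havoid j) (hdisj i j hij)

lemma buildIDSS_adj {G : SimpleGraph V} {u v : V} (huv : G.Adj u v) {k : ℕ}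
    {a b : Fin k → V} (w : ∀ i, G.Walk (a i) (b i))
    (hadj : ∀ i, G.Adj u (a i) ∧ G.Adj (b i) v)
    (havoid : ∀ i, ∀ z ∈ (w i).support, z ≠ u ∧ z ≠ v)
    (hdisj : ∀ i j, i ≠ j → ∀ z, z ∈ (w i).support → z ∉ (w j).support) :
    HasIDSS (biorient G) {u, v} (k + 1) := by
  classical
  refine ⟨fun i => if h : (i : ℕ) < k then
      wSub (hadj ⟨i, h⟩).1 (hadj ⟨i, h⟩).2 (w ⟨i, h⟩) else eSub huv, ?_, ?_⟩
  · intro i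
    by_cases h : (i : ℕ) < k
    · simp only [dif_pos h]
      refine ⟨wSub_strong _ _ _, ?_⟩
      intro z hz
      simp only [Set.mem_insert_iff, Set.mem_singleton_iff] at hz
      rcases hz with rfl | rfl
      · exact Or.inl (Or.inl rfl)
      · exact Or.inl (Or.inr rfl)
    · simp only [dif_neg h]
      exact ⟨eSub_strong huv, fun z hz => hz⟩
  · intro i j hij
    by_cases hi : (i : ℕ) < k <;> by_cases hj : (j : ℕ) < k
    · simp only [dif_pos hi, dif_pos hj]
      refine wSub_disj huv.ne _ _ (w ⟨i, hi⟩) _ _ (w ⟨j, hj⟩) (havoid _) (havoid _)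
        (hdisj _ _ ?_)
      intro h
      exact hij (Fin.ext (by simpa using congrArg Fin.val h))
    · simp only [dif_pos hi, dif_neg hj]
      exact wSub_eSub_disj huv _ _ (w ⟨i, hi⟩) (havoid _)
    · simp only [dif_neg hi, dif_pos hj]
      obtain ⟨h1, h2⟩ := wSub_eSub_disj huv _ _ (w ⟨j, hj⟩) (havoid _)
      rw [Set.inter_comm] at h1
      rw [Set.inter_comm] at h2
      exact ⟨h1, h2⟩
    · exfalso
      apply hij
      apply Fin.ext
      have hik : (i : ℕ) = k := le_antisymm (Nat.lt_succ_iff.mp i.2) (le_of_not_gt hi)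
      have hjk : (j : ℕ) = k := le_antisymm (Nat.lt_succ_iff.mp j.2) (le_of_not_gt hj)
      rw [hik, hjk]
end Bridge2

section Count
variable {V : Type*}

lemma rtg_split' {G : SimpleGraph V} {W : Set V} {T : Set V} {u v : V}
    (h : Relation.ReflTransGen (fun a b => G.Adj a b ∧ a ∈ W ∧ b ∈ W) u v)
    (hu : u ∉ T) :
    (∃ t ∈ T, t ∈ W) ∨
      Relation.ReflTransGen (fun a b => G.Adj a b ∧ a ∉ T ∧ b ∉ T) u v := by
  classical
  induction h with
  | refl => exact Or.inr .refl
  | @tail b c h1 h2 ih =>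
    by_cases hcT : c ∈ T
    · exact Or.inl ⟨c, hcT, h2.2.2⟩
    · rcases ih with h | hr
      · exact Or.inl h
      · by_cases hbT : b ∈ T
        · exact Or.inl ⟨b, hbT, h2.2.1⟩
        · exact Or.inr (hr.tail ⟨h2.1, hbT, hcT⟩)

/-- any strong subgraph of `biorient G` containing two distinct vertices `u ≠ v`
with vertex set inside `{u,v}` contains the arc `(u,v)`. -/
lemma trivial_piece_arc {G : SimpleGraph V} {u v : V} (huv : u ≠ v)
    {D : Subdigr (biorient G)} (hs : D.IsStrong) (hu : u ∈ D.verts) (hv : v ∈ D.verts)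
    (hsub : D.verts ⊆ {u, v}) : (u, v) ∈ D.arcs := by
  have h := hs u hu v hv
  rcases h.cases_head with h | ⟨c, hc, _⟩
  · exact absurd h huv
  · have hcv : c ∈ D.verts := (D.arcs_verts _ hc).2
    have hadj : G.Adj u c := D.arcs_adj _ hc
    have : c = u ∨ c = v := by simpa using hsub hcv
    rcases this with rfl | rfl
    · exact absurd hadj (G.loopless.irrefl _)
    · exact hc

lemma hasIDSS_card_le [Fintype V] {G : SimpleGraph V} {u v : V} (huv : u ≠ v) {p : ℕ}
    (h : HasIDSS (biorient G) {u, v} p) : p ≤ Fintype.card V - 1 := by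
  classical
  obtain ⟨f, hf1, hf2⟩ := h
  set P : Fin p → Prop := fun i => (f i).verts ⊆ {u, v} with hP
  have hP1 : ∀ i j, P i → P j → i = j := by
    intro i j hi hj
    by_contra hne
    have harc1 : (u, v) ∈ (f i).arcs :=
      trivial_piece_arc huv (hf1 i).1 ((hf1 i).2 (Or.inl rfl)) ((hf1 i).2 (Or.inr rfl)) hi
    have harc2 : (u, v) ∈ (f j).arcs :=
      trivial_piece_arc huv (hf1 j).1 ((hf1 j).2 (Or.inl rfl)) ((hf1 j).2 (Or.inr rfl)) hj
    have := (hf2 i j hne).2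
    rw [Set.eq_empty_iff_forall_notMem] at this
    exact this (u, v) ⟨harc1, harc2⟩
  have hg : ∀ i, ¬ P i → ∃ z, z ∈ (f i).verts ∧ z ∉ ({u, v} : Set V) := by
    intro i hi
    exact Set.not_subset.mp hi
  have hFex : ∀ i : Fin p, ∃ z : V, z ≠ v ∧
      ((P i ∧ z = u) ∨ (¬ P i ∧ z ∈ (f i).verts ∧ z ∉ ({u, v} : Set V))) := by
    intro i
    by_cases hi : P i
    · exact ⟨u, huv, Or.inl ⟨hi, rfl⟩⟩
    · obtain ⟨z, hz1, hz2⟩ := hg i hi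
      refine ⟨z, ?_, Or.inr ⟨hi, hz1, hz2⟩⟩
      intro hzv
      exact hz2 (by simp [hzv])
  choose F hFv hFspec using hFex
  have hFinj : Function.Injective F := by
    intro i j hij
    rcases hFspec i with ⟨hPi, hFi⟩ | ⟨hPi, hFi, hFi2⟩ <;>
      rcases hFspec j with ⟨hPj, hFj⟩ | ⟨hPj, hFj, hFj2⟩
    · exact hP1 i j hPi hPj
    · exact absurd (by rw [← hij, hFi]; exact Or.inl rfl) hFj2
    · exact absurd (by rw [hij, hFj]; exact Or.inl rfl) hFi2
    · by_contra hne
      have := (hf2 i j hne).1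
      have hmem : F i ∈ (f i).verts ∩ (f j).verts := ⟨hFi, hij ▸ hFj⟩
      rw [this] at hmem
      exact hFi2 hmem
  have hcard : p ≤ Fintype.card {z : V // z ≠ v} :=
    Fintype.card_fin p ▸ Fintype.card_le_of_injective (fun i => ⟨F i, hFv i⟩)
      (fun i j hij => hFinj (congrArg Subtype.val hij))
  have hcV : Fintype.card {z : V // ¬ z = v} = Fintype.card V - 1 := by
    rw [Fintype.card_subtype_compl, Fintype.card_subtype_eq]
  have : Fintype.card {z : V // z ≠ v} = Fintype.card {z : V // ¬ z = v} := rfl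
  omega

lemma hasIDSS_le_cut [Fintype V] {G : SimpleGraph V} {u v : V} {T : Finset V}
    (hu : u ∉ T) (hv : v ∉ T)
    (hnr : ¬ Relation.ReflTransGen
      (fun a b => G.Adj a b ∧ a ∉ (T : Set V) ∧ b ∉ (T : Set V)) u v)
    {p : ℕ} (h : HasIDSS (biorient G) {u, v} p) : p ≤ T.card := by
  classical
  obtain ⟨f, hf1, hf2⟩ := h
  have hget : ∀ i : Fin p, ∃ t, t ∈ T ∧ t ∈ (f i).verts := by
    intro i
    have hrtg : Relation.ReflTransGen
        (fun a b => G.Adj a b ∧ a ∈ (f i).verts ∧ b ∈ (f i).verts) u v := by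
      refine Relation.ReflTransGen.mono ?_ _ _
        ((hf1 i).1 u ((hf1 i).2 (Or.inl rfl)) v ((hf1 i).2 (Or.inr rfl)))
      intro a b hab
      exact ⟨(f i).arcs_adj _ hab, ((f i).arcs_verts _ hab).1, ((f i).arcs_verts _ hab).2⟩
    rcases rtg_split' (T := (T : Set V)) hrtg (by simpa using hu) with h | h
    · obtain ⟨t, ht1, ht2⟩ := h
      exact ⟨t, by simpa using ht1, ht2⟩
    · exact absurd h hnr
  choose g hgT hgv using hget
  have hginj : Function.Injective g := by
    intro i j hij
    by_contra hne
    have hmem : g i ∈ (f i).verts ∩ (f j).verts := ⟨hgv i, hij ▸ hgv j⟩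
    rw [(hf2 i j hne).1] at hmem
    rcases hmem with h | h
    · exact hu (by rw [← h]; exact hgT i)
    · exact hv (by rw [← h]; exact hgT i)
  calc p = (Finset.univ : Finset (Fin p)).card := by simp
    _ ≤ T.card := Finset.card_le_card_of_injOn g (fun i _ => hgT i)
        (fun i _ j _ h => hginj h)

end Count

section FinalGlue
variable {V : Type*}

/-- From a separator of the middle graph, no `u`–`v` connection avoiding it. -/
lemma msep_no_reach [Fintype V] [DecidableEq V] {Γ : SimpleGraph V} [DecidableRel Γ.Adj] {u v : V} (huv : u ≠ v) (hnadj : ¬ Γ.Adj u v)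
    {S : Finset V}
    (hS : MSep (del2 Γ u v) (Finset.univ.filter (fun z => Γ.Adj u z))
      (Finset.univ.filter (fun z => Γ.Adj z v)) S) :
    ¬ Relation.ReflTransGen
      (fun a b => Γ.Adj a b ∧ a ∉ (↑(S \ {u, v}) : Set V) ∧ b ∉ (↑(S \ {u, v}) : Set V)) u v := by
  classical
  intro hrtg
  have huT : u ∉ (↑(S \ {u, v}) : Set V) := by simp
  obtain ⟨w, hw⟩ := rtg_toWalk hrtg huT
  obtain ⟨a, b, w', hua, hbv, hsub⟩ := extract_mid huv hnadj w
  have haA : a ∈ Finset.univ.filter (fun z => Γ.Adj u z) := by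
    simp only [Finset.mem_filter, Finset.mem_univ, true_and]; exact hua
  have hbB : b ∈ Finset.univ.filter (fun z => Γ.Adj z v) := by
    simp only [Finset.mem_filter, Finset.mem_univ, true_and]; exact hbv
  obtain ⟨s, hsS, hssup⟩ := hS haA hbB w'
  have hane : a ≠ u ∧ a ≠ v :=
    ⟨fun h => Γ.loopless.irrefl u (h ▸ hua), fun h => hnadj (h ▸ hua)⟩
  have hs_ne := del2_support w' hane.1 hane.2 s hssup
  have hsT₀ : s ∈ (↑(S \ {u, v}) : Set V) := by
    simp only [Finset.coe_sdiff, Set.mem_diff, Finset.mem_coe]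
    exact ⟨hsS, by simp [hs_ne.1, hs_ne.2]⟩
  exact (hw s (hsub s hssup)) hsT₀

/-- Menger gives us the `k` vertex-disjoint connector walks avoiding `u,v`. -/
lemma menger_to_conn [Fintype V] [DecidableEq V] {G Γ : SimpleGraph V} [DecidableRel Γ.Adj]
    (hle : ∀ {a b : V}, Γ.Adj a b → G.Adj a b) {u v : V}
    (hnadj : ¬ Γ.Adj u v) (k : ℕ)
    (hsep : ∀ S : Finset V, MSep (del2 Γ u v)
        (Finset.univ.filter (fun z => Γ.Adj u z))
        (Finset.univ.filter (fun z => Γ.Adj z v)) S → k ≤ S.card) :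
    ∃ (a b : Fin k → V) (w : ∀ i, G.Walk (a i) (b i)),
      (∀ i, G.Adj u (a i) ∧ G.Adj (b i) v) ∧
      (∀ i, ∀ z ∈ (w i).support, z ≠ u ∧ z ≠ v) ∧
      (∀ i j, i ≠ j → ∀ z, z ∈ (w i).support → z ∉ (w j).support) := by
  classical
  obtain ⟨a, b, w, h1, hdisj⟩ :=
    menger ((del2 Γ u v).edgeSet.ncard) (del2 Γ u v) _ _ k le_rfl hsep
  have hadjA : ∀ i, Γ.Adj u (a i) := by
    intro i
    have := (h1 i).1
    simp only [Finset.mem_filter, Finset.mem_univ, true_and] at this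
    exact this
  have hadjB : ∀ i, Γ.Adj (b i) v := by
    intro i
    have := (h1 i).2
    simp only [Finset.mem_filter, Finset.mem_univ, true_and] at this
    exact this
  have hane : ∀ i, a i ≠ u ∧ a i ≠ v := fun i =>
    ⟨fun h => Γ.loopless.irrefl u (h ▸ hadjA i), fun h => hnadj (h ▸ hadjA i)⟩
  have hWG : ∀ i, ∀ e ∈ (w i).edges, e ∈ G.edgeSet := by
    intro i e he
    have hmem := (w i).edges_subset_edgeSet he
    induction e using Sym2.ind with
    | _ c d =>
      rw [SimpleGraph.mem_edgeSet] at hmem ⊢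
      exact hle hmem.1
  refine ⟨a, b, fun i => (w i).transfer G (hWG i), fun i => ⟨hle (hadjA i), hle (hadjB i)⟩,
    ?_, ?_⟩
  · intro i z hz
    rw [Walk.support_transfer] at hz
    exact del2_support (w i) (hane i).1 (hane i).2 z hz
  · intro i j hij z hz hz'
    rw [Walk.support_transfer] at hz hz'
    exact hdisj i j hij z hz hz'

lemma exists_IDSS [Fintype V] {G : SimpleGraph V} {u v : V} (huv : u ≠ v) (k : ℕ)
    (hT : ∀ T : Finset V,
      (Fintype.card V - T.card ≤ 1 ∨ ¬ (G.induce ((↑T : Set V)ᶜ)).Connected) →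
        k ≤ T.card) :
    HasIDSS (biorient G) {u, v} k := by
  classical
  by_cases hadj : G.Adj u v
  · -- adjacent case : delete the edge, get k-1 connectors, add the edge piece
    cases k with
    | zero => exact hasIDSS_zero
    | succ k' =>
      set Γ := G.deleteEdges {s(u, v)} with hΓ
      have hnadj : ¬ Γ.Adj u v := by simp [hΓ]
      have hle : ∀ {a b : V}, Γ.Adj a b → G.Adj a b := by
        intro a b h; rw [hΓ, SimpleGraph.deleteEdges_adj] at h; exact h.1
      have hΓadj : ∀ {a b : V}, G.Adj a b → a ≠ u → b ≠ u → Γ.Adj a b := by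
        intro a b h hau hbu
        rw [hΓ, SimpleGraph.deleteEdges_adj]
        refine ⟨h, ?_⟩
        intro hmem
        rw [Set.mem_singleton_iff, Sym2.eq_iff] at hmem
        rcases hmem with ⟨h1, _⟩ | ⟨_, h2⟩
        · exact hau h1
        · exact hbu h2
      have hΓadj' : ∀ {a b : V}, G.Adj a b → a ≠ v → b ≠ v → Γ.Adj a b := by
        intro a b h hav hbv
        rw [hΓ, SimpleGraph.deleteEdges_adj]
        refine ⟨h, ?_⟩
        intro hmem
        rw [Set.mem_singleton_iff, Sym2.eq_iff] at hmem
        rcases hmem with ⟨_, h2⟩ | ⟨h1, _⟩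
        · exact hbv h2
        · exact hav h1
      have hsep : ∀ S : Finset V, MSep (del2 Γ u v)
          (Finset.univ.filter (fun z => Γ.Adj u z))
          (Finset.univ.filter (fun z => Γ.Adj z v)) S → k' ≤ S.card := by
        intro S hS
        have hnr := msep_no_reach huv hnadj hS
        set T₀ : Finset V := S \ {u, v} with hT₀
        have huT₀ : u ∉ T₀ := by simp [hT₀]
        have hvT₀ : v ∉ T₀ := by simp [hT₀]
        have hT₀S : T₀.card ≤ S.card := Finset.card_le_card Finset.sdiff_subset
        by_cases hall : ∀ z : V, z ∈ T₀ ∨ z = u ∨ z = v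
        · have hcard : Fintype.card V ≤ T₀.card + 2 := by
            have hsub2 : (Finset.univ : Finset V) ⊆ insert v (insert u T₀) := by
              intro z _
              rcases hall z with h | h | h <;> simp [h]
            have h1 : (Finset.univ : Finset V).card ≤ (insert v (insert u T₀)).card :=
              Finset.card_le_card hsub2
            have h2 := Finset.card_insert_le v (insert u T₀)
            have h3 := Finset.card_insert_le u T₀
            rw [Finset.card_univ] at h1
            omega
          have hTcard : (insert u T₀).card = T₀.card + 1 :=
            Finset.card_insert_of_notMem huT₀
          have := hT (insert u T₀) (Or.inl (by omega))
          omega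
        · push_neg at hall
          obtain ⟨z₀, hz₀T, hz₀u, hz₀v⟩ := hall
          have hone : ¬ Relation.ReflTransGen
              (fun a b => Γ.Adj a b ∧ a ∉ (↑T₀ : Set V) ∧ b ∉ (↑T₀ : Set V)) z₀ u ∨
            ¬ Relation.ReflTransGen
              (fun a b => Γ.Adj a b ∧ a ∉ (↑T₀ : Set V) ∧ b ∉ (↑T₀ : Set V)) z₀ v := by
            by_contra hcon
            push_neg at hcon
            have hsym : Symmetric (fun a b => Γ.Adj a b ∧ a ∉ (↑T₀ : Set V) ∧ b ∉ (↑T₀ : Set V)) :=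
              fun a b hab => ⟨hab.1.symm, hab.2.2, hab.2.1⟩
            exact hnr (((@Relation.ReflTransGen.symmetric _ _ ⟨fun a b h => hsym h⟩).symm _ _ hcon.1).trans hcon.2)
          rcases hone with hz | hz
          · -- z₀ cannot reach u : T := insert v T₀ separates
            have hcut : ¬ (G.induce ((↑(insert v T₀) : Set V)ᶜ)).Connected := by
              intro hconn
              have hz₀m : z₀ ∈ ((↑(insert v T₀) : Set V)ᶜ) := by
                simp [hz₀v, hz₀T]
              have hum : u ∈ ((↑(insert v T₀) : Set V)ᶜ) := by
                simp [huv, huT₀]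
              have hrtg := reach_of_induce_reachable hz₀m hum
                (hconn.preconnected ⟨z₀, hz₀m⟩ ⟨u, hum⟩)
              apply hz
              refine Relation.ReflTransGen.mono ?_ _ _ hrtg
              intro p q hpq
              obtain ⟨hpq1, hp2, hq2⟩ := hpq
              simp only [Set.mem_compl_iff, Finset.coe_insert, Set.mem_insert_iff,
                Finset.mem_coe, not_or] at hp2 hq2
              exact ⟨hΓadj' hpq1 hp2.1 hq2.1, by simpa using hp2.2, by simpa using hq2.2⟩
            have h1 := hT (insert v T₀) (Or.inr hcut)
            have h2 : (insert v T₀).card = T₀.card + 1 :=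
              Finset.card_insert_of_notMem hvT₀
            omega
          · -- z₀ cannot reach v : T := insert u T₀ separates
            have hcut : ¬ (G.induce ((↑(insert u T₀) : Set V)ᶜ)).Connected := by
              intro hconn
              have hz₀m : z₀ ∈ ((↑(insert u T₀) : Set V)ᶜ) := by
                simp [hz₀u, hz₀T]
              have hvm : v ∈ ((↑(insert u T₀) : Set V)ᶜ) := by
                simp [huv.symm, hvT₀]
              have hrtg := reach_of_induce_reachable hz₀m hvm
                (hconn.preconnected ⟨z₀, hz₀m⟩ ⟨v, hvm⟩)
              apply hz
              refine Relation.ReflTransGen.mono ?_ _ _ hrtg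
              intro p q hpq
              obtain ⟨hpq1, hp2, hq2⟩ := hpq
              simp only [Set.mem_compl_iff, Finset.coe_insert, Set.mem_insert_iff,
                Finset.mem_coe, not_or] at hp2 hq2
              exact ⟨hΓadj hpq1 hp2.1 hq2.1, by simpa using hp2.2, by simpa using hq2.2⟩
            have h1 := hT (insert u T₀) (Or.inr hcut)
            have h2 : (insert u T₀).card = T₀.card + 1 :=
              Finset.card_insert_of_notMem huT₀
            omega
      obtain ⟨a, b, w, hconn1, hconn2, hconn3⟩ := menger_to_conn hle hnadj k' hsep
      exact buildIDSS_adj hadj w hconn1 hconn2 hconn3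
  · -- nonadjacent case
    have hsep : ∀ S : Finset V, MSep (del2 G u v)
        (Finset.univ.filter (fun z => G.Adj u z))
        (Finset.univ.filter (fun z => G.Adj z v)) S → k ≤ S.card := by
      intro S hS
      have hnr := msep_no_reach huv hadj hS
      set T₀ : Finset V := S \ {u, v} with hT₀
      have hcut : ¬ (G.induce ((↑T₀ : Set V)ᶜ)).Connected := by
        intro hconn
        have hum : u ∈ ((↑T₀ : Set V)ᶜ) := by simp [hT₀]
        have hvm : v ∈ ((↑T₀ : Set V)ᶜ) := by simp [hT₀]
        have hrtg := reach_of_induce_reachable hum hvm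
          (hconn.preconnected ⟨u, hum⟩ ⟨v, hvm⟩)
        apply hnr
        refine Relation.ReflTransGen.mono ?_ _ _ hrtg
        intro p q hpq
        exact ⟨hpq.1, hpq.2.1, hpq.2.2⟩
      have h1 := hT T₀ (Or.inr hcut)
      have h2 : T₀.card ≤ S.card := Finset.card_le_card Finset.sdiff_subset
      omega
    obtain ⟨a, b, w, hconn1, hconn2, hconn3⟩ := menger_to_conn (fun h => h) hadj k hsep
    exact buildIDSS huv w hconn1 hconn2 hconn3

end FinalGlue


section MainProof
variable {V : Type*}

lemma le_kappaS_of_IDSS [Fintype V] {G : SimpleGraph V} {u v : V} (huv : u ≠ v)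
    {p : ℕ} (h : HasIDSS (biorient G) {u, v} p) :
    p ≤ kappaS (biorient G) ({u, v} : Set V) :=
  le_csSup ⟨Fintype.card V - 1, fun q hq => hasIDSS_card_le huv hq⟩ h

end MainProof

/-- For every undirected graph `G` on at least two vertices, the strong
subgraph 2-connectivity of the complete biorientation of `G` equals the
vertex connectivity of `G`. -/
theorem stmt_0 {V : Type*} [Fintype V] (G : SimpleGraph V)
    (hV : 2 ≤ Fintype.card V) :
    kappaK (biorient G) 2 = vConn G := by
  classical
  have h1V : 1 < Fintype.card V := by omega
  have hKne : {m | ∃ S : Finset V, S.card = 2 ∧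
      kappaS (biorient G) (↑S : Set V) = m}.Nonempty := by
    obtain ⟨u, v, huv⟩ := Fintype.exists_pair_of_one_lt_card h1V
    exact ⟨_, {u, v}, Finset.card_pair huv, rfl⟩
  have hVne : {m | ∃ T : Finset V, T.card = m ∧
      (Fintype.card V - T.card ≤ 1 ∨ ¬ (G.induce ((↑T : Set V)ᶜ)).Connected)}.Nonempty :=
    ⟨Fintype.card V, Finset.univ, by simp, Or.inl (by simp)⟩
  apply le_antisymm
  · -- kappaK ≤ vConn
    have hmem : ∃ T : Finset V, T.card = vConn G ∧
        (Fintype.card V - T.card ≤ 1 ∨ ¬ (G.induce ((↑T : Set V)ᶜ)).Connected) := by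
      unfold vConn
      exact Nat.sInf_mem hVne
    obtain ⟨T, hTc, hTprop⟩ := hmem
    have hbound : ∃ u v : V, u ≠ v ∧
        ∀ p, HasIDSS (biorient G) {u, v} p → p ≤ T.card := by
      rcases hTprop with h1 | h2
      · obtain ⟨u, v, huv⟩ := Fintype.exists_pair_of_one_lt_card h1V
        refine ⟨u, v, huv, fun p hp => ?_⟩
        have hple := hasIDSS_card_le huv hp
        have hTle : T.card ≤ Fintype.card V := by
          simpa using Finset.card_le_univ T
        omega
      · by_cases hcne : ((↑T : Set V)ᶜ).Nonempty
        · have hnp : ¬ (G.induce ((↑T : Set V)ᶜ)).Preconnected := by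
            intro hpc
            exact h2 ((SimpleGraph.connected_iff _).mpr ⟨hpc, hcne.to_subtype⟩)
          simp only [SimpleGraph.Preconnected] at hnp
          push_neg at hnp
          obtain ⟨x, y, hxy⟩ := hnp
          refine ⟨↑x, ↑y, ?_, ?_⟩
          · intro h
            exact hxy (by rw [Subtype.ext h])
          · intro p hp
            have hnr : ¬ Relation.ReflTransGen
                (fun a b => G.Adj a b ∧ a ∉ (↑T : Set V) ∧ b ∉ (↑T : Set V)) ↑x ↑y := by
              intro hrtg
              obtain ⟨hv', hr⟩ := induce_reachable_of_rtg
                (s := ((↑T : Set V)ᶜ)) hrtg x.2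
              exact hxy hr
            refine hasIDSS_le_cut ?_ ?_ hnr hp
            · exact fun hmem => x.2 (Finset.mem_coe.mpr hmem)
            · exact fun hmem => y.2 (Finset.mem_coe.mpr hmem)
        · -- complement empty : T = univ
          have hTuniv : T = Finset.univ := by
            have : (↑T : Set V) = Set.univ := by
              rw [← Set.compl_empty_iff]
              exact Set.not_nonempty_iff_eq_empty.mp hcne
            exact Finset.coe_injective (by simpa using this)
          obtain ⟨u, v, huv⟩ := Fintype.exists_pair_of_one_lt_card h1V
          refine ⟨u, v, huv, fun p hp => ?_⟩
          have hple := hasIDSS_card_le huv hp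
          have : T.card = Fintype.card V := by rw [hTuniv, Finset.card_univ]
          omega
    obtain ⟨u, v, huv, hb⟩ := hbound
    have h1 : kappaK (biorient G) 2 ≤ kappaS (biorient G) (↑({u, v} : Finset V) : Set V) := by
      unfold kappaK
      exact Nat.sInf_le ⟨{u, v}, Finset.card_pair huv, rfl⟩
    have h2 : kappaS (biorient G) (↑({u, v} : Finset V) : Set V) ≤ T.card := by
      have hcoe : (↑({u, v} : Finset V) : Set V) = ({u, v} : Set V) := by simp
      rw [hcoe]
      exact csSup_le ⟨0, hasIDSS_zero⟩ (fun p hp => hb p hp)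
    exact h1.trans (h2.trans_eq hTc)
  · -- vConn ≤ kappaK
    have hmemK : ∃ S : Finset V, S.card = 2 ∧
        kappaS (biorient G) (↑S : Set V) = kappaK (biorient G) 2 := by
      unfold kappaK
      exact Nat.sInf_mem hKne
    obtain ⟨S₀, hS₀c, hS₀v⟩ := hmemK
    obtain ⟨u, v, huv, rfl⟩ := Finset.card_eq_two.mp hS₀c
    by_contra hlt
    push_neg at hlt
    have hTall : ∀ T : Finset V,
        (Fintype.card V - T.card ≤ 1 ∨ ¬ (G.induce ((↑T : Set V)ᶜ)).Connected) →
          kappaK (biorient G) 2 + 1 ≤ T.card := by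
      intro T hp
      have : vConn G ≤ T.card := by
        unfold vConn
        exact Nat.sInf_le ⟨T, rfl, hp⟩
      omega
    have hID := exists_IDSS huv (kappaK (biorient G) 2 + 1) hTall
    have hle := le_kappaS_of_IDSS huv hID
    have hcoe : (↑({u, v} : Finset V) : Set V) = ({u, v} : Set V) := by simp
    rw [hcoe] at hS₀v
    omega
end

section
/- Let D be a digraph with underlying undirected graph G, and let x and y be distinct vertices of D. Then the maximum number of pairwise internally disjoint strong subgraphs of D containing {x,y} is at most the maximum number of internally disjoint paths between x and y in G. -/
/-- The underlying undirected graph of a digraph `D`: forget orientations and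
merge opposite arc pairs into single edges (loops are discarded). -/
def underlying {V : Type*} (D : Digr V) : SimpleGraph V where
  Adj u v := u ≠ v ∧ (D.Adj u v ∨ D.Adj v u)
  symm := by
    constructor
    intro u v h
    exact ⟨fun e => h.1 e.symm, h.2.symm⟩
  loopless := by
    constructor
    intro v h
    exact h.1 rfl

/-- `HasIDPaths G x y p` : there are `p` pairwise distinct, pairwise internally
disjoint `x`–`y` paths in `G` (sharing no vertices other than `x` and `y`). -/
def HasIDPaths {V : Type*} (G : SimpleGraph V) (x y : V) (p : ℕ) : Prop :=
  ∃ f : Fin p → G.Walk x y,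
    (∀ i, (f i).IsPath) ∧
    (∀ i j, i ≠ j → f i ≠ f j ∧
      ∀ v, v ∈ (f i).support → v ∈ (f j).support → v = x ∨ v = y)

/-- The maximum number of pairwise internally disjoint `x`–`y` paths in `G`. -/
noncomputable def maxIDPaths {V : Type*} [Fintype V] (G : SimpleGraph V)
    (x y : V) : ℕ :=
  sSup {p | HasIDPaths G x y p}

/-- From reflexive-transitive reachability we can extract a duplicate-free
chain. -/
lemma exists_nodup_chain {V : Type*} {r : V → V → Prop} {x y : V}
    (h : Relation.ReflTransGen r x y) :
    ∃ l : List V, List.Chain r x l ∧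
      (x :: l).getLast (List.cons_ne_nil _ _) = y ∧ (x :: l).Nodup := by
  induction h with
  | refl => exact ⟨[], List.Chain.nil, rfl, List.nodup_singleton x⟩
  | @tail b c _ hbc ih =>
    obtain ⟨l, hc, hlast, hnd⟩ := ih
    by_cases hmem : c ∈ x :: l
    · rcases List.mem_cons.mp hmem with hcx | hcl
      · exact ⟨[], List.Chain.nil, hcx.symm, List.nodup_singleton x⟩
      · obtain ⟨l1, l2, rfl⟩ := List.append_of_mem hcl
        refine ⟨l1 ++ [c], ?_, ?_, ?_⟩
        · have hc' : List.Chain' r (x :: (l1 ++ c :: l2)) := hc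
          have hpre : (x :: (l1 ++ [c])) <+: (x :: (l1 ++ c :: l2)) :=
            ⟨l2, by simp⟩
          exact hc'.prefix hpre
        · have := List.getLast_append_of_ne_nil (l := x :: l1) (l' := [c]) (by simp) (List.cons_ne_nil _ _)
          simpa using this
        · have hsub : List.Sublist (x :: (l1 ++ [c])) (x :: (l1 ++ c :: l2)) :=
            List.Sublist.cons₂ x
              (List.Sublist.append_left ((List.nil_sublist l2).cons₂ c) l1)
          exact hnd.sublist hsub
    · refine ⟨l ++ [c], ?_, ?_, ?_⟩
      · have h1 : List.Chain' r (x :: l) := hc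
        have h2 : List.Chain' r [c] := List.isChain_singleton c
        have h3 : List.Chain' r ((x :: l) ++ [c]) := by
          refine List.IsChain.append h1 h2 ?_
          intro a ha d hd
          simp only [List.head?_cons, Option.mem_def, Option.some.injEq] at hd
          rw [List.getLast?_eq_getLast (List.cons_ne_nil _ _)] at ha
          simp only [Option.mem_def, Option.some.injEq] at ha
          rw [← ha, hlast, ← hd]
          exact hbc
        exact h3
      · have := List.getLast_append_of_ne_nil (l := x :: l) (l' := [c]) (by simp) (List.cons_ne_nil _ _)
        simpa using this
      · have : ((x :: l) ++ [c]).Nodup := by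
          refine hnd.append (List.nodup_singleton c) ?_
          intro a ha hb
          simp only [List.mem_singleton] at hb
          subst hb
          exact hmem ha
        simpa using this

/-- Every element of a chain is the target of a step. -/
lemma chain_mem_step {V : Type*} {r : V → V → Prop} :
    ∀ {x : V} {l : List V}, List.Chain r x l → ∀ a ∈ l, ∃ b, r b a := by
  intro x l
  induction l generalizing x with
  | nil => intro _ a ha; exact absurd ha List.not_mem_nil
  | cons c t ih =>
    intro hc a ha
    rw [List.Chain, List.chain_cons] at hc
    rcases List.mem_cons.mp ha with h | h
    · exact ⟨x, h ▸ hc.1⟩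
    · exact ih hc.2 a h

/-- Build an undirected walk from a duplicate-free directed chain through a
subdigraph. -/
lemma exists_walk_of_chain {V : Type*} {D : Digr V} (H : Subdigr D) :
    ∀ (l : List V) (x y : V),
      List.Chain (fun a b => (a, b) ∈ H.arcs) x l →
      (x :: l).getLast (List.cons_ne_nil _ _) = y → (x :: l).Nodup →
      ∃ w : (underlying D).Walk x y, w.support = x :: l := by
  intro l
  induction l with
  | nil =>
    intro x y _ hy _
    cases hy
    exact ⟨SimpleGraph.Walk.nil, rfl⟩
  | cons a t ih =>
    intro x y hc hy hn
    rw [List.Chain, List.chain_cons] at hc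
    have hxa : x ≠ a := by
      intro h
      have : x ∉ a :: t := (List.nodup_cons.mp hn).1
      exact this (h ▸ List.mem_cons_self (a := a) (l := t))
    have hadj : (underlying D).Adj x a :=
      ⟨hxa, Or.inl (H.arcs_adj _ hc.1)⟩
    have hy' : (a :: t).getLast (List.cons_ne_nil _ _) = y := by
      rw [← hy, List.getLast_cons (List.cons_ne_nil _ _)]
    obtain ⟨w, hw⟩ := ih a y hc.2 hy' (List.nodup_cons.mp hn).2
    exact ⟨SimpleGraph.Walk.cons hadj w, by simp [hw]⟩

lemma hasIDPaths_of_hasIDSS {V : Type*} (D : Digr V) (x y : V) (hxy : x ≠ y)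
    {p : ℕ} (h : HasIDSS D {x, y} p) : HasIDPaths (underlying D) x y p := by
  obtain ⟨f, hf1, hf2⟩ := h
  have key : ∀ i : Fin p, ∃ l : List V,
      List.Chain (fun a b => (a, b) ∈ (f i).arcs) x l ∧
      (x :: l).getLast (List.cons_ne_nil _ _) = y ∧ (x :: l).Nodup := by
    intro i
    have hx : x ∈ (f i).verts := (hf1 i).2 (by simp)
    have hy : y ∈ (f i).verts := (hf1 i).2 (by simp)
    exact exists_nodup_chain ((hf1 i).1 x hx y hy)
  choose l hchain hlast hnd using key
  choose w hw using fun i =>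
    exists_walk_of_chain (f i) (l i) x y (hchain i) (hlast i) (hnd i)
  have hsupverts : ∀ i, ∀ v ∈ (w i).support, v ∈ (f i).verts := by
    intro i v hv
    rw [hw i] at hv
    rcases List.mem_cons.mp hv with h | h
    · exact h ▸ (hf1 i).2 (by simp)
    · obtain ⟨b, hb⟩ := chain_mem_step (hchain i) v h
      exact ((f i).arcs_verts _ hb).2
  refine ⟨w, ?_, ?_⟩
  · intro i
    rw [SimpleGraph.Walk.isPath_def, hw i]
    exact hnd i
  · intro i j hij
    constructor
    · intro heq
      have hsup : x :: l i = x :: l j := by rw [← hw i, ← hw j, heq]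
      have hll : l i = l j := by injection hsup
      cases hli : l i with
      | nil =>
        have := hlast i
        rw [hli] at this
        exact hxy this
      | cons a t =>
        have h1 : (x, a) ∈ (f i).arcs := by
          have := hchain i
          rw [hli, List.Chain, List.chain_cons] at this
          exact this.1
        have h2 : (x, a) ∈ (f j).arcs := by
          have := hchain j
          rw [← hll, hli, List.Chain, List.chain_cons] at this
          exact this.1
        have hempty := (hf2 i j hij).2
        have : (x, a) ∈ (f i).arcs ∩ (f j).arcs := ⟨h1, h2⟩
        rw [hempty] at this
        exact this
    · intro v hvi hvj
      have hv : v ∈ ({x, y} : Set V) := by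
        rw [← (hf2 i j hij).1]
        exact ⟨hsupverts i v hvi, hsupverts j v hvj⟩
      simpa using hv

/-- The maximum number of pairwise internally disjoint strong subgraphs of a
digraph `D` containing `{x, y}` is at most the maximum number of internally
disjoint `x`–`y` paths in the underlying undirected graph of `D`. -/
theorem stmt_1 {V : Type*} [Fintype V] (D : Digr V) (x y : V) (hxy : x ≠ y) :
    kappaS D {x, y} ≤ maxIDPaths (underlying D) x y := by
  classical
  have hB : BddAbove {p | HasIDPaths (underlying D) x y p} := by
    refine ⟨Fintype.card ((underlying D).Path x y), ?_⟩
    rintro p ⟨g, hg1, hg2⟩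
    have hinj : Function.Injective
        (fun i : Fin p => (⟨g i, hg1 i⟩ : (underlying D).Path x y)) := by
      intro i j hij
      by_contra hne
      exact (hg2 i j (fun h => hne (h ▸ rfl))).1 (congrArg Subtype.val hij)
    simpa using Fintype.card_le_of_injective _ hinj
  have hne : ({p | HasIDSS D {x, y} p} : Set ℕ).Nonempty := by
    refine ⟨0, Fin.elim0, fun i => i.elim0, fun i => i.elim0⟩
  refine csSup_le hne ?_
  intro p hp
  exact le_csSup hB (hasIDPaths_of_hasIDSS D x y hxy hp)
end

section
/- Let G be an undirected graph and let S ⊆ V(G) with |S| ≥ 2 be an independent set in G. Then the maximum number of pairwise internally disjoint S-trees in G equals the maximum number of pairwise internally disjoint strong subgraphs of ↔G containing S, i.e. κ_S(G) = κ_S(↔G). -/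
/-- An `S`-tree in `G`: a subgraph of `G` that is a tree and contains `S`. -/
def IsSTree {V : Type*} (G : SimpleGraph V) (S : Set V) (T : G.Subgraph) : Prop :=
  T.coe.IsTree ∧ S ⊆ T.verts

/-- `HasIDTrees G S p` : there are `p` pairwise internally disjoint `S`-trees
in `G` (vertex sets intersecting exactly in `S`, edge sets disjoint). -/
def HasIDTrees {V : Type*} (G : SimpleGraph V) (S : Set V) (p : ℕ) : Prop :=
  ∃ f : Fin p → G.Subgraph,
    (∀ i, IsSTree G S (f i)) ∧
    (∀ i j, i ≠ j → (f i).verts ∩ (f j).verts = S ∧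
      (f i).edgeSet ∩ (f j).edgeSet = ∅)

/-- `κ_S(G)`: the maximum number of pairwise internally disjoint `S`-trees. -/
noncomputable def kappaSTrees {V : Type*} (G : SimpleGraph V) (S : Set V) : ℕ :=
  sSup {p | HasIDTrees G S p}


open SimpleGraph

-- reroute lemma
lemma reroute {W : Type*} (K : SimpleGraph W) (x y : W)
    (h : (K \ fromEdgeSet {s(x,y)}).Reachable x y) :
    ∀ u v : W, K.Reachable u v → (K \ fromEdgeSet {s(x,y)}).Reachable u v := by
  intro u v ⟨p⟩
  induction p with
  | nil => exact Reachable.refl _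
  | @cons a b c hab p ih =>
    refine Reachable.trans ?_ ih
    by_cases he : s(a,b) = s(x,y)
    · rw [Sym2.eq_iff] at he
      rcases he with ⟨rfl, rfl⟩ | ⟨rfl, rfl⟩
      · exact h
      · exact h.symm
    · exact Adj.reachable (by simp [hab, he])

lemma exists_tree_le {W : Type*} [Fintype W] :
    ∀ (n : ℕ) (K : SimpleGraph W), K.edgeSet.ncard = n → K.Connected →
      ∃ T ≤ K, T.IsTree := by
  intro n
  induction n using Nat.strong_induction_on with
  | _ n ih =>
    intro K hn hK
    by_cases hac : K.IsAcyclic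
    · exact ⟨K, le_refl _, hK, hac⟩
    · rw [isAcyclic_iff_forall_edge_isBridge] at hac
      push_neg at hac
      obtain ⟨e, he, hbr⟩ := hac
      induction e using Sym2.ind with
      | _ x y =>
      rw [mem_edgeSet] at he
      rw [isBridge_iff] at hbr
      push_neg at hbr
      have hreach : (K \ fromEdgeSet {s(x,y)}).Reachable x y := hbr
      set K' := K \ fromEdgeSet {s(x,y)} with hK'
      have hle : K' ≤ K := sdiff_le
      have hconn : K'.Connected := by
        have : Nonempty W := hK.nonempty
        exact Connected.mk (fun u v => reroute K x y hreach u v (hK.preconnected u v))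
      have hss : K'.edgeSet ⊂ K.edgeSet := by
        constructor
        · exact edgeSet_mono hle
        · intro hsub
          have : s(x,y) ∈ K'.edgeSet := hsub he
          simp [hK'] at this
      have hlt : K'.edgeSet.ncard < n := by
        rw [← hn]
        exact Set.ncard_lt_ncard hss (K.edgeSet.toFinite)
      obtain ⟨T, hT, ht⟩ := ih _ hlt K' rfl hconn
      exact ⟨T, hT.trans hle, ht⟩

lemma fwd {V : Type*} (G : SimpleGraph V) (S : Set V)
    (p : ℕ) (h : HasIDTrees G S p) : HasIDSS (biorient G) S p := by
  obtain ⟨f, hf, hdis⟩ := h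
  refine ⟨fun i => ⟨(f i).verts, {a | (f i).Adj a.1 a.2},
    fun a ha => (f i).adj_sub ha,
    fun a ha => ⟨(f i).edge_vert ha, (f i).edge_vert ha.symm⟩⟩, ?_, ?_⟩
  · intro i
    refine ⟨?_, (hf i).2⟩
    intro u hu v hv
    have hr : ((f i).coe).Reachable ⟨u, hu⟩ ⟨v, hv⟩ :=
      ((hf i).1.isConnected).preconnected _ _
    rw [SimpleGraph.reachable_iff_reflTransGen] at hr
    have := Relation.ReflTransGen.lift (fun a : (f i).verts => (a : V))
      (fun a b (hab : (f i).coe.Adj a b) => (by exact hab : (f i).Adj a b)) _ _ hr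
    exact this
  · intro i j hij
    refine ⟨(hdis i j hij).1, ?_⟩
    ext ⟨a, b⟩
    simp only [Set.mem_inter_iff, Set.mem_setOf_eq, Set.mem_empty_iff_false, iff_false]
    rintro ⟨h1, h2⟩
    have : s(a,b) ∈ (f i).edgeSet ∩ (f j).edgeSet := ⟨h1, h2⟩
    rw [(hdis i j hij).2] at this
    exact this

lemma bwd {V : Type*} [Fintype V] (G : SimpleGraph V) (S : Set V)
    (hS : S.Nonempty) (hind : ∀ u ∈ S, ∀ v ∈ S, ¬ G.Adj u v)
    (p : ℕ) (h : HasIDSS (biorient G) S p) : HasIDTrees G S p := by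
  classical
  obtain ⟨g, hg, hdis⟩ := h
  -- underlying undirected graph of each strong subdigraph
  have key : ∀ i : Fin p, ∃ T : G.Subgraph,
      IsSTree G S T ∧ T.verts = (g i).verts ∧
      (∀ a b, T.Adj a b → (a,b) ∈ (g i).arcs ∨ (b,a) ∈ (g i).arcs) := by
    intro i
    set H := g i with hH
    let K : SimpleGraph H.verts :=
      { Adj := fun a b => ((a : V), (b : V)) ∈ H.arcs ∨ ((b : V), (a : V)) ∈ H.arcs
        symm := ⟨fun a b hab => hab.symm⟩
        loopless := by
          exact ⟨by rintro a (ha | ha) <;> exact G.loopless.irrefl a (H.arcs_adj _ ha)⟩ }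
    have hne : Nonempty H.verts := by
      obtain ⟨s, hs⟩ := hS
      exact ⟨⟨s, (hg i).2 hs⟩⟩
    have hreach : ∀ u v : V, Relation.ReflTransGen (fun a b => (a, b) ∈ H.arcs) u v →
        ∀ (hu : u ∈ H.verts) (hv : v ∈ H.verts), K.Reachable ⟨u, hu⟩ ⟨v, hv⟩ := by
      intro u v hr
      induction hr with
      | refl => intro hu hv; exact SimpleGraph.Reachable.refl _
      | @tail b c hub hbc ih =>
        intro hu hv
        have hb : b ∈ H.verts := (H.arcs_verts _ hbc).1
        exact (ih hu hb).trans (SimpleGraph.Adj.reachable (Or.inl hbc))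
    have hKconn : K.Connected := by
      exact SimpleGraph.Connected.mk
        (fun u v => hreach u.1 v.1 ((hg i).1 u.1 u.2 v.1 v.2) u.2 v.2)
    obtain ⟨T', hT'le, hT'⟩ := exists_tree_le K.edgeSet.ncard K rfl hKconn
    refine ⟨⟨H.verts, fun a b => ∃ (ha : a ∈ H.verts) (hb : b ∈ H.verts),
        T'.Adj ⟨a, ha⟩ ⟨b, hb⟩, ?_, ?_, ?_⟩, ⟨?_, (hg i).2⟩, rfl, ?_⟩
    · rintro a b ⟨ha, hb, hab⟩
      rcases hT'le hab with h1 | h1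
      · exact H.arcs_adj _ h1
      · exact (H.arcs_adj _ h1).symm
    · rintro a b ⟨ha, hb, hab⟩; exact ha
    · constructor; rintro a b ⟨ha, hb, hab⟩; exact ⟨hb, ha, hab.symm⟩
    · -- coe is a tree
      have hcoe : (⟨H.verts, fun a b => ∃ (ha : a ∈ H.verts) (hb : b ∈ H.verts),
          T'.Adj ⟨a, ha⟩ ⟨b, hb⟩, by rintro a b ⟨ha, hb, hab⟩
                                     rcases hT'le hab with h1 | h1
                                     · exact H.arcs_adj _ h1
                                     · exact (H.arcs_adj _ h1).symm,
          by rintro a b ⟨ha, hb, hab⟩; exact ha,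
          by constructor; rintro a b ⟨ha, hb, hab⟩; exact ⟨hb, ha, hab.symm⟩⟩ :
          G.Subgraph).coe = T' := by
        ext a b
        simp only [SimpleGraph.Subgraph.coe_adj]
        constructor
        · rintro ⟨ha, hb, hab⟩
          convert hab
        · intro hab
          exact ⟨a.2, b.2, hab⟩
      rw [hcoe]
      exact hT'
    · intro a b hab
      obtain ⟨ha, hb, hab⟩ := hab
      exact hT'le hab
  choose f hf hfv hfa using key
  refine ⟨f, hf, ?_⟩
  intro i j hij
  constructor
  · rw [hfv i, hfv j]; exact (hdis i j hij).1
  · ext e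
    induction e using Sym2.ind with
    | _ a b =>
    simp only [Set.mem_inter_iff, SimpleGraph.Subgraph.mem_edgeSet,
      Set.mem_empty_iff_false, iff_false]
    rintro ⟨h1, h2⟩
    have H1 := hfa i a b h1
    have H2 := hfa j a b h2
    have hadj : G.Adj a b := (f i).adj_sub h1
    have hconV : ∀ v : V, v ∈ (g i).verts → v ∈ (g j).verts → v ∈ S := by
      intro v hvi hvj
      rw [← (hdis i j hij).1]; exact ⟨hvi, hvj⟩
    have harcs := (hdis i j hij).2
    -- helper: membership in both arc sets is impossible
    have hni : ∀ x y : V, (x,y) ∈ (g i).arcs → (x,y) ∈ (g j).arcs → False := by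
      intro x y hx hy
      have : (x,y) ∈ (g i).arcs ∩ (g j).arcs := ⟨hx, hy⟩
      rw [harcs] at this; exact this
    rcases H1 with h1' | h1' <;> rcases H2 with h2' | h2'
    · exact hni a b h1' h2'
    · -- (a,b) ∈ arcs i, (b,a) ∈ arcs j : a,b ∈ S, contradiction with independence
      have haS : a ∈ S := hconV a ((g i).arcs_verts _ h1').1 ((g j).arcs_verts _ h2').2
      have hbS : b ∈ S := hconV b ((g i).arcs_verts _ h1').2 ((g j).arcs_verts _ h2').1
      exact hind a haS b hbS hadj
    · have haS : a ∈ S := hconV a ((g i).arcs_verts _ h1').2 ((g j).arcs_verts _ h2').1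
      have hbS : b ∈ S := hconV b ((g i).arcs_verts _ h1').1 ((g j).arcs_verts _ h2').2
      exact hind a haS b hbS hadj
    · exact hni b a h1' h2'

/-- If `S` is an independent set of size at least 2 in a graph `G`, then the
maximum number of pairwise internally disjoint `S`-trees in `G` equals the
maximum number of pairwise internally disjoint strong subgraphs of the
complete biorientation `↔G` containing `S`. -/
theorem stmt_3 {V : Type*} [Fintype V] (G : SimpleGraph V) (S : Set V)
    (hS : 2 ≤ S.ncard) (hind : ∀ u ∈ S, ∀ v ∈ S, ¬ G.Adj u v) :
    kappaSTrees G S = kappaS (biorient G) S := by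
  have hne : S.Nonempty := by
    rcases Set.eq_empty_or_nonempty S with h | h
    · simp [h] at hS
    · exact h
  unfold kappaSTrees kappaS
  congr 1
  ext p
  exact ⟨fwd G S p, bwd G S hne hind p⟩
end

section
/- Let D be a digraph with distinct vertices s₁, t₁, s₂, t₂, and let D' be the digraph obtained from D by adding two new vertices x and y together with the arcs t₁x, xs₁, t₂y, ys₂, xs₂, s₂x, yt₁, t₁y. Then D contains two vertex-disjoint directed paths, one from s₁ to t₁ and one from s₂ to t₂, if and only if κ_{{x,y}}(D') ≥ 2, i.e. D' contains two internally disjoint strong subgraphs each containing {x,y}. -/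
/-- The digraph `D'` obtained from `D` by adding two new vertices
`x = Sum.inr false` and `y = Sum.inr true` together with the arcs
`t₁x, xs₁, t₂y, ys₂, xs₂, s₂x, yt₁, t₁y`. -/
def DPrime {V : Type*} (D : Digr V) (s₁ t₁ s₂ t₂ : V) : Digr (V ⊕ Bool) where
  Adj a b :=
    match a, b with
    | Sum.inl u, Sum.inl v => D.Adj u v
    | Sum.inl u, Sum.inr false => u = t₁ ∨ u = s₂
    | Sum.inl u, Sum.inr true => u = t₂ ∨ u = t₁
    | Sum.inr false, Sum.inl v => v = s₁ ∨ v = s₂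
    | Sum.inr true, Sum.inl v => v = s₂ ∨ v = t₁
    | Sum.inr _, Sum.inr _ => False

/-- A directed path from `s` to `t` in `D`, given as a duplicate-free list of
vertices starting at `s`, ending at `t`, with an arc between consecutive
vertices. -/
def IsDiPath {V : Type*} (D : Digr V) (s t : V) (l : List V) : Prop :=
  l ≠ [] ∧ l.head? = some s ∧ l.getLast? = some t ∧ l.Nodup ∧ l.Chain' D.Adj

namespace Stmt12Aux
open Relation List

variable {α : Type*} {R : α → α → Prop}

def zipRel (l : List α) : α → α → Prop := fun u v => (u, v) ∈ l.zip l.tail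

lemma zipRel_cons {a : α} {l : List α} {u v : α} (h : zipRel l u v) :
    zipRel (a :: l) u v := by
  cases l with
  | nil => simp [zipRel] at h
  | cons b t =>
    simp only [zipRel, List.zip, List.tail] at *
    exact List.mem_cons_of_mem _ h

lemma zipRel_adj : ∀ {l : List α}, l.Chain' R → ∀ {u v : α}, zipRel l u v → R u v := by
  intro l
  induction l with
  | nil => intro _ u v h; simp [zipRel] at h
  | cons a t ih =>
    intro hc u v h
    cases t with
    | nil => simp [zipRel] at h
    | cons b t' =>
      simp only [zipRel, List.tail, List.zip_cons_cons, List.mem_cons] at h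
      rcases h with h | h
      · obtain ⟨h1, h2⟩ := Prod.mk.injEq .. ▸ h
        cases h; exact hc.rel_head
      · exact ih hc.tail h

lemma zipRel_mem {l : List α} {u v : α} (h : zipRel l u v) : u ∈ l ∧ v ∈ l := by
  obtain ⟨h1, h2⟩ := List.of_mem_zip h
  exact ⟨h1, List.mem_of_mem_tail h2⟩

lemma head_reaches : ∀ {l : List α} {a : α}, a ∈ l → ∀ {s : α}, l.head? = some s →
    ReflTransGen (zipRel l) s a := by
  intro l
  induction l with
  | nil => simp
  | cons b t ih =>
    intro a ha s hs
    simp only [List.head?_cons, Option.some.injEq] at hs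
    subst hs
    rcases List.mem_cons.1 ha with rfl | ha
    · exact .refl
    · cases t with
      | nil => simp at ha
      | cons c t' =>
        have h1 : zipRel (b :: c :: t') b c := by
          simp [zipRel]
        have h2 : ReflTransGen (zipRel (c :: t')) c a := ih ha rfl
        exact .head h1 (ReflTransGen.mono (fun u v h => zipRel_cons h) _ _ h2)

lemma reaches_last : ∀ {l : List α} {a : α}, a ∈ l → ∀ {t : α}, l.getLast? = some t →
    ReflTransGen (zipRel l) a t := by
  intro l
  induction l with
  | nil => simp
  | cons b tl ih =>
    intro a ha t ht
    cases tl with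
    | nil =>
      simp at ha ht
      subst ha; subst ht; exact .refl
    | cons c t' =>
      have ht' : (c :: t').getLast? = some t := by
        rwa [List.getLast?_cons_cons] at ht
      rcases List.mem_cons.1 ha with rfl | ha
      · have h1 : zipRel (a :: c :: t') a c := by simp [zipRel]
        exact .head h1 (ReflTransGen.mono (fun u v h => zipRel_cons h) _ _ (ih (List.mem_cons_self (a := c) (l := t')) ht'))
      · exact ReflTransGen.mono (fun u v h => zipRel_cons h) _ _ (ih ha ht')

lemma split_of_not_nodup : ∀ {l : List α}, ¬ l.Nodup →
    ∃ (a : α) (l₁ l₂ l₃ : List α), l = l₁ ++ a :: l₂ ++ a :: l₃ := by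
  intro l
  induction l with
  | nil => simp
  | cons b t ih =>
    intro h
    rw [List.nodup_cons] at h
    push_neg at h
    by_cases hb : b ∈ t
    · obtain ⟨s, u, rfl⟩ := List.append_of_mem hb
      exact ⟨b, [], s, u, by simp⟩
    · obtain ⟨a, l₁, l₂, l₃, rfl⟩ := ih (h hb)
      exact ⟨a, b :: l₁, l₂, l₃, by simp⟩

lemma exists_chain_list {s t : α} (h : ReflTransGen R s t) :
    ∃ l : List α, l ≠ [] ∧ l.head? = some s ∧ l.getLast? = some t ∧ l.Chain' R ∧
      ∀ a ∈ l, a = s ∨ ∃ b, R b a := by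
  induction h with
  | refl => exact ⟨[s], by simp; exact List.isChain_singleton s⟩
  | @tail b c hsb hbc ih =>
    obtain ⟨l, hne, hh, hl, hc, hm⟩ := ih
    refine ⟨l ++ [c], by simp, ?_, by simp, ?_, ?_⟩
    · rw [List.head?_append, hh]; rfl
    · rw [List.Chain', List.isChain_append]
      refine ⟨hc, List.isChain_singleton c, ?_⟩
      intro u hu v hv
      simp at hv
      subst hv
      rw [hl] at hu
      simp at hu
      subst hu
      exact hbc
    · intro a ha
      rcases List.mem_append.1 ha with ha | ha
      · exact hm a ha
      · simp at ha; subst ha; exact .inr ⟨b, hbc⟩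

lemma nodup_refine {P : α → Prop} : ∀ (n : ℕ) (l : List α) (_ : l.length ≤ n) {s t : α}
    (_ : l ≠ []) (_ : l.head? = some s) (_ : l.getLast? = some t) (_ : l.Chain' R)
    (_ : ∀ a ∈ l, P a),
    ∃ l' : List α, l' ≠ [] ∧ l'.head? = some s ∧ l'.getLast? = some t ∧ l'.Nodup ∧
      l'.Chain' R ∧ ∀ a ∈ l', P a := by
  intro n
  induction n with
  | zero => intro l hl s t hne; interval_cases h : l.length; simp_all
  | succ n ih =>
    intro l hlen s t hne hh hlast hc hP
    by_cases hnd : l.Nodup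
    · exact ⟨l, hne, hh, hlast, hnd, hc, hP⟩
    · obtain ⟨a, l₁, l₂, l₃, rfl⟩ := split_of_not_nodup hnd
      have hlen' : (l₁ ++ a :: l₃).length ≤ n := by
        simp only [List.length_append, List.length_cons] at hlen ⊢
        omega
      have hsub : ∀ b ∈ l₁ ++ a :: l₃, b ∈ l₁ ++ a :: l₂ ++ a :: l₃ := by
        intro b hb
        simp only [List.mem_append, List.mem_cons] at hb ⊢
        tauto
      refine ih (l₁ ++ a :: l₃) hlen' (by simp) ?_ ?_ ?_ (fun b hb => hP b (hsub b hb))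
      · rw [List.head?_append] at hh ⊢
        cases l₁ <;> simp_all
      · rw [show l₁ ++ a :: l₂ ++ a :: l₃ = (l₁ ++ a :: l₂) ++ (a :: l₃) by simp] at hlast
        rw [List.getLast?_append] at hlast ⊢
        rcases l₃ with _ | ⟨d, l₃⟩
        · simpa using hlast
        · simpa using hlast
      · have hpre : List.Chain' R (l₁ ++ [a]) := by
          refine hc.prefix ⟨l₂ ++ a :: l₃, by simp⟩
        have hsuf : List.Chain' R (a :: l₃) := by
          refine hc.suffix ⟨l₁ ++ a :: l₂, by simp⟩
        rw [List.Chain', List.isChain_append]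
        refine ⟨(List.isChain_append.1 hpre).1, hsuf, ?_⟩
        intro u hu v hv
        simp at hv
        subst hv
        exact (List.isChain_append.1 hpre).2.2 u hu a (by simp)

lemma exists_nodup_path {s t : α} (h : ReflTransGen R s t) :
    ∃ l : List α, l ≠ [] ∧ l.head? = some s ∧ l.getLast? = some t ∧ l.Nodup ∧
      l.Chain' R ∧ ∀ a ∈ l, a = s ∨ ∃ b, R b a := by
  obtain ⟨l, hne, hh, hl, hc, hm⟩ := exists_chain_list h
  exact nodup_refine l.length l le_rfl hne hh hl hc hm

lemma mem_of_getLast?_eq {l : List α} {a : α} (h : l.getLast? = some a) : a ∈ l := by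
  obtain ⟨hne, rfl⟩ := List.mem_getLast?_eq_getLast (show a ∈ l.getLast? by rw [h]; rfl)
  exact List.getLast_mem hne

lemma proj_reach {V : Type*} {D' : Digr (V ⊕ Bool)} (H : Subdigr D') (t : V) (g : Bool → V)
    (h1 : ∀ v b, (Sum.inl v, Sum.inr b) ∈ H.arcs → v = t ∨ v = g b)
    (h2 : ∀ b c, (Sum.inr b, c) ∈ H.arcs → c = Sum.inl (g b)) :
    ∀ a, ReflTransGen (fun p q => (p, q) ∈ H.arcs) a (Sum.inl t) →
      ReflTransGen (fun u v : V => (Sum.inl u, Sum.inl v) ∈ H.arcs) (Sum.elim id g a) t := by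
  intro a h
  induction h using Relation.ReflTransGen.head_induction_on with
  | refl => exact .refl
  | @head a c h' _ ih =>
    cases a with
    | inl v =>
      cases c with
      | inl w => exact ReflTransGen.head h' ih
      | inr b =>
        rcases h1 v b h' with rfl | rfl
        · exact .refl
        · exact ih
    | inr b =>
      have := h2 b c h'
      subst this
      exact ih

end Stmt12Aux

open Relation List Stmt12Aux

section Main

variable {V : Type*}

private lemma backward_key (D : Digr V) (s₁ t₁ s₂ t₂ : V)
    (Ha Hb : Subdigr (DPrime D s₁ t₁ s₂ t₂))
    (hsa : Ha.IsStrong) (hsb : Hb.IsStrong)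
    (hxav : Sum.inr false ∈ Ha.verts) (hyav : Sum.inr true ∈ Ha.verts)
    (hxbv : Sum.inr false ∈ Hb.verts) (hybv : Sum.inr true ∈ Hb.verts)
    (hv : Ha.verts ∩ Hb.verts = {Sum.inr false, Sum.inr true})
    (harc : Ha.arcs ∩ Hb.arcs = ∅)
    (hxa : ((Sum.inr false : V ⊕ Bool), (Sum.inl s₁ : V ⊕ Bool)) ∈ Ha.arcs) :
    ∃ l₁ l₂ : List V, IsDiPath D s₁ t₁ l₁ ∧ IsDiPath D s₂ t₂ l₂ ∧ l₁.Disjoint l₂ := by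
  have notin : ∀ v : V, Sum.inl v ∈ Ha.verts → Sum.inl v ∈ Hb.verts → False := by
    intro v h1 h2
    have : (Sum.inl v : V ⊕ Bool) ∈ Ha.verts ∩ Hb.verts := ⟨h1, h2⟩
    rw [hv] at this
    rcases this with h | h <;> simp_all
  have arcdisj : ∀ p : (V ⊕ Bool) × (V ⊕ Bool), p ∈ Ha.arcs → p ∈ Hb.arcs → False := by
    intro p h1 h2
    have : p ∈ Ha.arcs ∩ Hb.arcs := ⟨h1, h2⟩
    rw [harc] at this
    exact this
  have hs1a : (Sum.inl s₁ : V ⊕ Bool) ∈ Ha.verts := (Ha.arcs_verts _ hxa).2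
  have hs1b : (Sum.inl s₁ : V ⊕ Bool) ∉ Hb.verts := fun h => notin _ hs1a h
  -- Hb has the arc x → s₂
  have hxb : ((Sum.inr false : V ⊕ Bool), (Sum.inl s₂ : V ⊕ Bool)) ∈ Hb.arcs := by
    have hr := hsb _ hxbv _ hybv
    rcases hr.cases_head with h | ⟨c, hc, _⟩
    · simp at h
    · have hadj := Hb.arcs_adj _ hc
      cases c with
      | inl w =>
        rcases hadj with rfl | rfl
        · exact absurd hc (fun h => arcdisj _ hxa h)
        · exact hc
      | inr b => exact hadj.elim
  have hs2b : (Sum.inl s₂ : V ⊕ Bool) ∈ Hb.verts := (Hb.arcs_verts _ hxb).2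
  have hs2a : (Sum.inl s₂ : V ⊕ Bool) ∉ Ha.verts := fun h => notin _ h hs2b
  -- Ha has the arc t₁ → x
  have ht1a_in : ((Sum.inl t₁ : V ⊕ Bool), (Sum.inr false : V ⊕ Bool)) ∈ Ha.arcs := by
    have hr := hsa _ hyav _ hxav
    rcases hr.cases_tail with h | ⟨c, _, hc⟩
    · simp at h
    · have hadj := Ha.arcs_adj _ hc
      cases c with
      | inl w =>
        rcases hadj with rfl | rfl
        · exact hc
        · exact absurd (Ha.arcs_verts _ hc).1 hs2a
      | inr b => cases b <;> exact hadj.elim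
  have ht1a : (Sum.inl t₁ : V ⊕ Bool) ∈ Ha.verts := (Ha.arcs_verts _ ht1a_in).1
  have ht1b : (Sum.inl t₁ : V ⊕ Bool) ∉ Hb.verts := fun h => notin _ ht1a h
  -- Hb has the arc t₂ → y
  have ht2b_in : ((Sum.inl t₂ : V ⊕ Bool), (Sum.inr true : V ⊕ Bool)) ∈ Hb.arcs := by
    have hr := hsb _ hxbv _ hybv
    rcases hr.cases_tail with h | ⟨c, _, hc⟩
    · simp at h
    · have hadj := Hb.arcs_adj _ hc
      cases c with
      | inl w =>
        rcases hadj with rfl | rfl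
        · exact hc
        · exact absurd (Hb.arcs_verts _ hc).1 ht1b
      | inr b => cases b <;> exact hadj.elim
  have ht2b : (Sum.inl t₂ : V ⊕ Bool) ∈ Hb.verts := (Hb.arcs_verts _ ht2b_in).1
  have ht2a : (Sum.inl t₂ : V ⊕ Bool) ∉ Ha.verts := fun h => notin _ h ht2b
  -- projection for Ha
  have hr1 : ReflTransGen (fun u v : V => (Sum.inl u, Sum.inl v) ∈ Ha.arcs) s₁ t₁ := by
    have h1 : ∀ v b, ((Sum.inl v : V ⊕ Bool), Sum.inr b) ∈ Ha.arcs →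
        v = t₁ ∨ v = (fun b : Bool => if b then t₁ else s₁) b := by
      intro v b hb
      have hadj := Ha.arcs_adj _ hb
      cases b
      · rcases hadj with rfl | rfl
        · exact .inl rfl
        · exact absurd (Ha.arcs_verts _ hb).1 hs2a
      · rcases hadj with rfl | rfl
        · exact absurd (Ha.arcs_verts _ hb).1 ht2a
        · exact .inl rfl
    have h2 : ∀ b c, ((Sum.inr b : V ⊕ Bool), c) ∈ Ha.arcs →
        c = Sum.inl ((fun b : Bool => if b then t₁ else s₁) b) := by
      intro b c hb
      have hadj := Ha.arcs_adj _ hb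
      cases b
      · cases c with
        | inl w =>
          rcases hadj with rfl | rfl
          · rfl
          · exact absurd (Ha.arcs_verts _ hb).2 hs2a
        | inr b' => exact hadj.elim
      · cases c with
        | inl w =>
          rcases hadj with rfl | rfl
          · exact absurd (Ha.arcs_verts _ hb).2 hs2a
          · rfl
        | inr b' => exact hadj.elim
    have := proj_reach Ha t₁ (fun b : Bool => if b then t₁ else s₁) h1 h2
      (Sum.inl s₁) (hsa _ hs1a _ ht1a)
    simpa using this
  -- projection for Hb
  have hr2 : ReflTransGen (fun u v : V => (Sum.inl u, Sum.inl v) ∈ Hb.arcs) s₂ t₂ := by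
    have h1 : ∀ v b, ((Sum.inl v : V ⊕ Bool), Sum.inr b) ∈ Hb.arcs →
        v = t₂ ∨ v = (fun _ : Bool => s₂) b := by
      intro v b hb
      have hadj := Hb.arcs_adj _ hb
      cases b
      · rcases hadj with rfl | rfl
        · exact absurd (Hb.arcs_verts _ hb).1 ht1b
        · exact .inr rfl
      · rcases hadj with rfl | rfl
        · exact .inl rfl
        · exact absurd (Hb.arcs_verts _ hb).1 ht1b
    have h2 : ∀ b c, ((Sum.inr b : V ⊕ Bool), c) ∈ Hb.arcs →
        c = Sum.inl ((fun _ : Bool => s₂) b) := by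
      intro b c hb
      have hadj := Hb.arcs_adj _ hb
      cases b
      · cases c with
        | inl w =>
          rcases hadj with rfl | rfl
          · exact absurd (Hb.arcs_verts _ hb).2 hs1b
          · rfl
        | inr b' => exact hadj.elim
      · cases c with
        | inl w =>
          rcases hadj with rfl | rfl
          · rfl
          · exact absurd (Hb.arcs_verts _ hb).2 ht1b
        | inr b' => exact hadj.elim
    have := proj_reach Hb t₂ (fun _ : Bool => s₂) h1 h2
      (Sum.inl s₂) (hsb _ hs2b _ ht2b)
    simpa using this
  obtain ⟨l₁, h1ne, h1h, h1l, h1nd, h1c, h1m⟩ := exists_nodup_path hr1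
  obtain ⟨l₂, h2ne, h2h, h2l, h2nd, h2c, h2m⟩ := exists_nodup_path hr2
  have hmem1 : ∀ v ∈ l₁, (Sum.inl v : V ⊕ Bool) ∈ Ha.verts := by
    intro v hv
    rcases h1m v hv with rfl | ⟨b, hb⟩
    · exact hs1a
    · exact (Ha.arcs_verts _ hb).2
  have hmem2 : ∀ v ∈ l₂, (Sum.inl v : V ⊕ Bool) ∈ Hb.verts := by
    intro v hv
    rcases h2m v hv with rfl | ⟨b, hb⟩
    · exact hs2b
    · exact (Hb.arcs_verts _ hb).2
  refine ⟨l₁, l₂, ⟨h1ne, h1h, h1l, h1nd, h1c.imp fun u v h => Ha.arcs_adj (Sum.inl u, Sum.inl v) h⟩,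
    ⟨h2ne, h2h, h2l, h2nd, h2c.imp fun u v h => Hb.arcs_adj (Sum.inl u, Sum.inl v) h⟩, ?_⟩
  intro v hv1 hv2
  exact notin v (hmem1 v hv1) (hmem2 v hv2)

end Main

section Main2

variable {V : Type*}

private lemma forward_key (D : Digr V) (s₁ t₁ s₂ t₂ : V) (l₁ l₂ : List V) (hp1 : IsDiPath D s₁ t₁ l₁) (hp2 : IsDiPath D s₂ t₂ l₂)
    (hdisj : l₁.Disjoint l₂) :
    (∃ H₁ H₂ : Subdigr (DPrime D s₁ t₁ s₂ t₂), H₁.IsStrong ∧ H₂.IsStrong ∧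
      ({Sum.inr false, Sum.inr true} : Set (V ⊕ Bool)) ⊆ H₁.verts ∧
      ({Sum.inr false, Sum.inr true} : Set (V ⊕ Bool)) ⊆ H₂.verts ∧
      H₁.verts ∩ H₂.verts = {Sum.inr false, Sum.inr true} ∧
      H₁.arcs ∩ H₂.arcs = ∅) := by
  obtain ⟨h1ne, h1h, h1l, h1nd, h1c⟩ := hp1
  obtain ⟨h2ne, h2h, h2l, h2nd, h2c⟩ := hp2
  set x : V ⊕ Bool := Sum.inr false with hxdef
  set y : V ⊕ Bool := Sum.inr true with hydef
  set D' := DPrime D s₁ t₁ s₂ t₂ with hD'def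
  set L₁ : List (V ⊕ Bool) := l₁.map Sum.inl with hL1def
  set L₂ : List (V ⊕ Bool) := l₂.map Sum.inl with hL2def
  have hs1mem : s₁ ∈ l₁ := List.mem_of_mem_head? (by rw [h1h]; rfl)
  have ht1mem : t₁ ∈ l₁ := mem_of_getLast?_eq h1l
  have hs2mem : s₂ ∈ l₂ := List.mem_of_mem_head? (by rw [h2h]; rfl)
  have ht2mem : t₂ ∈ l₂ := mem_of_getLast?_eq h2l
  have hC1 : L₁.Chain' D'.Adj := (List.isChain_map Sum.inl).2 (h1c.imp fun a b h => h)
  have hC2 : L₂.Chain' D'.Adj := (List.isChain_map Sum.inl).2 (h2c.imp fun a b h => h)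
  have hL1h : L₁.head? = some (Sum.inl s₁) := by rw [hL1def, List.head?_map, h1h]; rfl
  have hL1l : L₁.getLast? = some (Sum.inl t₁) := by rw [hL1def, List.getLast?_map, h1l]; rfl
  have hL2h : L₂.head? = some (Sum.inl s₂) := by rw [hL2def, List.head?_map, h2h]; rfl
  have hL2l : L₂.getLast? = some (Sum.inl t₂) := by rw [hL2def, List.getLast?_map, h2l]; rfl
  set W₁ : Set (V ⊕ Bool) := Sum.inl '' {v | v ∈ l₁} ∪ {x, y} with hW1def
  set W₂ : Set (V ⊕ Bool) := Sum.inl '' {v | v ∈ l₂} ∪ {x, y} with hW2def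
  set A₁ : Set ((V ⊕ Bool) × (V ⊕ Bool)) :=
    {p | zipRel L₁ p.1 p.2} ∪
      {(x, Sum.inl s₁), (Sum.inl t₁, x), (Sum.inl t₁, y), (y, Sum.inl t₁)} with hA1def
  set A₂ : Set ((V ⊕ Bool) × (V ⊕ Bool)) :=
    {p | zipRel L₂ p.1 p.2} ∪
      {(x, Sum.inl s₂), (Sum.inl s₂, x), (Sum.inl t₂, y), (y, Sum.inl s₂)} with hA2def
  have hA1adj : ∀ p ∈ A₁, D'.Adj p.1 p.2 := by
    rintro ⟨p1, p2⟩ hp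
    rcases hp with hp | hp
    · exact zipRel_adj hC1 hp
    · simp only [Set.mem_insert_iff, Set.mem_singleton_iff, Prod.mk.injEq] at hp
      rcases hp with ⟨rfl, rfl⟩ | ⟨rfl, rfl⟩ | ⟨rfl, rfl⟩ | ⟨rfl, rfl⟩
      · exact Or.inl rfl
      · exact Or.inl rfl
      · exact Or.inr rfl
      · exact Or.inr rfl
  have hA2adj : ∀ p ∈ A₂, D'.Adj p.1 p.2 := by
    rintro ⟨p1, p2⟩ hp
    rcases hp with hp | hp
    · exact zipRel_adj hC2 hp
    · simp only [Set.mem_insert_iff, Set.mem_singleton_iff, Prod.mk.injEq] at hp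
      rcases hp with ⟨rfl, rfl⟩ | ⟨rfl, rfl⟩ | ⟨rfl, rfl⟩ | ⟨rfl, rfl⟩
      · exact Or.inr rfl
      · exact Or.inr rfl
      · exact Or.inl rfl
      · exact Or.inl rfl
  have hA1verts : ∀ p ∈ A₁, p.1 ∈ W₁ ∧ p.2 ∈ W₁ := by
    rintro ⟨p1, p2⟩ hp
    rcases hp with hp | hp
    · obtain ⟨m1, m2⟩ := zipRel_mem hp
      rw [hL1def] at m1 m2
      obtain ⟨v, hv, rfl⟩ := List.mem_map.1 m1
      obtain ⟨w, hw, rfl⟩ := List.mem_map.1 m2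
      exact ⟨Or.inl ⟨v, hv, rfl⟩, Or.inl ⟨w, hw, rfl⟩⟩
    · simp only [Set.mem_insert_iff, Set.mem_singleton_iff, Prod.mk.injEq] at hp
      rcases hp with ⟨rfl, rfl⟩ | ⟨rfl, rfl⟩ | ⟨rfl, rfl⟩ | ⟨rfl, rfl⟩
      · exact ⟨Or.inr (by simp), Or.inl ⟨s₁, hs1mem, rfl⟩⟩
      · exact ⟨Or.inl ⟨t₁, ht1mem, rfl⟩, Or.inr (by simp)⟩
      · exact ⟨Or.inl ⟨t₁, ht1mem, rfl⟩, Or.inr (by simp)⟩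
      · exact ⟨Or.inr (by simp), Or.inl ⟨t₁, ht1mem, rfl⟩⟩
  have hA2verts : ∀ p ∈ A₂, p.1 ∈ W₂ ∧ p.2 ∈ W₂ := by
    rintro ⟨p1, p2⟩ hp
    rcases hp with hp | hp
    · obtain ⟨m1, m2⟩ := zipRel_mem hp
      rw [hL2def] at m1 m2
      obtain ⟨v, hv, rfl⟩ := List.mem_map.1 m1
      obtain ⟨w, hw, rfl⟩ := List.mem_map.1 m2
      exact ⟨Or.inl ⟨v, hv, rfl⟩, Or.inl ⟨w, hw, rfl⟩⟩
    · simp only [Set.mem_insert_iff, Set.mem_singleton_iff, Prod.mk.injEq] at hp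
      rcases hp with ⟨rfl, rfl⟩ | ⟨rfl, rfl⟩ | ⟨rfl, rfl⟩ | ⟨rfl, rfl⟩
      · exact ⟨Or.inr (by simp), Or.inl ⟨s₂, hs2mem, rfl⟩⟩
      · exact ⟨Or.inl ⟨s₂, hs2mem, rfl⟩, Or.inr (by simp)⟩
      · exact ⟨Or.inl ⟨t₂, ht2mem, rfl⟩, Or.inr (by simp)⟩
      · exact ⟨Or.inr (by simp), Or.inl ⟨s₂, hs2mem, rfl⟩⟩
  refine ⟨⟨W₁, A₁, hA1adj, hA1verts⟩, ⟨W₂, A₂, hA2adj, hA2verts⟩, ?_, ?_, ?_, ?_, ?_, ?_⟩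
  -- strongness of H₁
  · have hxs1 : (x, Sum.inl s₁) ∈ A₁ := Or.inr (by simp)
    have ht1x : (Sum.inl t₁, x) ∈ A₁ := Or.inr (by simp)
    have ht1y : (Sum.inl t₁, y) ∈ A₁ := Or.inr (by simp)
    have hyt1 : (y, Sum.inl t₁) ∈ A₁ := Or.inr (by simp)
    have hsub : ∀ u v : V ⊕ Bool, zipRel L₁ u v → (u, v) ∈ A₁ := fun u v h => Or.inl h
    have key : ∀ a ∈ W₁, ReflTransGen (fun a b => (a, b) ∈ A₁) x a ∧
        ReflTransGen (fun a b => (a, b) ∈ A₁) a x := by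
      intro a ha
      rcases ha with ⟨v, hv, rfl⟩ | ha
      · constructor
        · exact .head hxs1 (ReflTransGen.mono hsub _ _ (head_reaches (List.mem_map_of_mem (f := Sum.inl) hv) hL1h))
        · exact (ReflTransGen.mono hsub _ _ (reaches_last (List.mem_map_of_mem (f := Sum.inl) hv) hL1l)).tail ht1x
      · rcases ha with rfl | rfl
        · exact ⟨.refl, .refl⟩
        · constructor
          · exact ((ReflTransGen.head (r := fun a b : V ⊕ Bool => (a, b) ∈ A₁) hxs1
              (ReflTransGen.mono (p := fun a b : V ⊕ Bool => (a, b) ∈ A₁) hsub _ _ (head_reaches (List.mem_map_of_mem (f := Sum.inl) ht1mem) hL1h)))).tail ht1y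
          · exact ReflTransGen.head hyt1 (.single ht1x)
    intro u hu v hv
    exact ((key u hu).2).trans ((key v hv).1)
  -- strongness of H₂
  · have hxs2 : (x, Sum.inl s₂) ∈ A₂ := Or.inr (by simp)
    have hs2x : (Sum.inl s₂, x) ∈ A₂ := Or.inr (by simp)
    have ht2y : (Sum.inl t₂, y) ∈ A₂ := Or.inr (by simp)
    have hys2 : (y, Sum.inl s₂) ∈ A₂ := Or.inr (by simp)
    have hsub : ∀ u v : V ⊕ Bool, zipRel L₂ u v → (u, v) ∈ A₂ := fun u v h => Or.inl h
    have key : ∀ a ∈ W₂, ReflTransGen (fun a b => (a, b) ∈ A₂) x a ∧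
        ReflTransGen (fun a b => (a, b) ∈ A₂) a x := by
      intro a ha
      rcases ha with ⟨v, hv, rfl⟩ | ha
      · constructor
        · exact .head hxs2 (ReflTransGen.mono hsub _ _ (head_reaches (List.mem_map_of_mem (f := Sum.inl) hv) hL2h))
        · exact (((ReflTransGen.mono hsub _ _ (reaches_last (List.mem_map_of_mem (f := Sum.inl) hv) hL2l)).tail
            ht2y).tail hys2).tail hs2x
      · rcases ha with rfl | rfl
        · exact ⟨.refl, .refl⟩
        · constructor
          · exact (((ReflTransGen.head (r := fun a b : V ⊕ Bool => (a, b) ∈ A₂) hxs2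
              (ReflTransGen.mono (p := fun a b : V ⊕ Bool => (a, b) ∈ A₂) hsub _ _ (head_reaches (List.mem_map_of_mem (f := Sum.inl) ht2mem) hL2h)))).tail ht2y)
          · exact ReflTransGen.head hys2 (.single hs2x)
    intro u hu v hv
    exact ((key u hu).2).trans ((key v hv).1)
  · intro a ha; exact Or.inr ha
  · intro a ha; exact Or.inr ha
  -- vertex intersection
  · ext a
    constructor
    · rintro ⟨h1, h2⟩
      rcases h1 with ⟨v, hv, rfl⟩ | h1
      · rcases h2 with ⟨w, hw, hweq⟩ | h2
        · obtain rfl : w = v := Sum.inl.injEq .. ▸ hweq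
          exact absurd hw (hdisj hv)
        · rcases h2 with h2 | h2 <;> simp [hxdef, hydef] at h2
      · exact h1
    · intro ha
      exact ⟨Or.inr ha, Or.inr ha⟩
  -- arc intersection
  · ext p
    simp only [Set.mem_inter_iff, Set.mem_empty_iff_false, iff_false, not_and]
    intro h1 h2
    have e1 : p.1 ∈ ({x, y} : Set (V ⊕ Bool)) := by
      have m1 := (hA1verts p h1).1
      have m2 := (hA2verts p h2).1
      rcases m1 with ⟨v, hv, hveq⟩ | m1
      · rcases m2 with ⟨w, hw, hweq⟩ | m2
        · rw [← hveq] at hweq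
          obtain rfl : w = v := Sum.inl.injEq .. ▸ hweq
          exact absurd hw (hdisj hv)
        · exact m2
      · exact m1
    have e2 : p.2 ∈ ({x, y} : Set (V ⊕ Bool)) := by
      have m1 := (hA1verts p h1).2
      have m2 := (hA2verts p h2).2
      rcases m1 with ⟨v, hv, hveq⟩ | m1
      · rcases m2 with ⟨w, hw, hweq⟩ | m2
        · rw [← hveq] at hweq
          obtain rfl : w = v := Sum.inl.injEq .. ▸ hweq
          exact absurd hw (hdisj hv)
        · exact m2
      · exact m1
    rcases h1 with h1 | h1
    · have := (zipRel_mem h1).1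
      rw [hL1def] at this
      obtain ⟨v, _, hveq⟩ := List.mem_map.1 this
      rw [← hveq] at e1
      rcases e1 with e1 | e1 <;> simp [hxdef, hydef] at e1
    · simp only [Set.mem_insert_iff, Set.mem_singleton_iff, Prod.mk.injEq] at h1
      obtain ⟨q1, q2⟩ := p
      simp only [Prod.mk.injEq] at h1
      rcases h1 with ⟨rfl, rfl⟩ | ⟨rfl, rfl⟩ | ⟨rfl, rfl⟩ | ⟨rfl, rfl⟩
      · rcases e2 with e | e <;> simp [hxdef, hydef] at e
      · rcases e1 with e | e <;> simp [hxdef, hydef] at e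
      · rcases e1 with e | e <;> simp [hxdef, hydef] at e
      · rcases e2 with e | e <;> simp [hxdef, hydef] at e

end Main2


/-- With `x = Sum.inr false` and `y = Sum.inr true`, the digraph `D` contains
two vertex-disjoint directed paths, one from `s₁` to `t₁` and one from `s₂` to
`t₂`, if and only if `D'` contains two internally disjoint strong subgraphs
each containing `{x, y}`. -/
theorem stmt_12 {V : Type*} (D : Digr V) (s₁ t₁ s₂ t₂ : V)
    (hdist : [s₁, t₁, s₂, t₂].Nodup) :
    (∃ l₁ l₂ : List V, IsDiPath D s₁ t₁ l₁ ∧ IsDiPath D s₂ t₂ l₂ ∧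
      l₁.Disjoint l₂) ↔
    (∃ H₁ H₂ : Subdigr (DPrime D s₁ t₁ s₂ t₂), H₁.IsStrong ∧ H₂.IsStrong ∧
      ({Sum.inr false, Sum.inr true} : Set (V ⊕ Bool)) ⊆ H₁.verts ∧
      ({Sum.inr false, Sum.inr true} : Set (V ⊕ Bool)) ⊆ H₂.verts ∧
      H₁.verts ∩ H₂.verts = {Sum.inr false, Sum.inr true} ∧
      H₁.arcs ∩ H₂.arcs = ∅) := by
  constructor
  · rintro ⟨l₁, l₂, hp1, hp2, hdisj⟩
    exact forward_key D s₁ t₁ s₂ t₂ l₁ l₂ hp1 hp2 hdisj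
  · rintro ⟨H₁, H₂, hs1, hs2, hsub1, hsub2, hv, ha⟩
    have hx1 : (Sum.inr false : V ⊕ Bool) ∈ H₁.verts := hsub1 (by simp)
    have hy1 : (Sum.inr true : V ⊕ Bool) ∈ H₁.verts := hsub1 (by simp)
    have hx2 : (Sum.inr false : V ⊕ Bool) ∈ H₂.verts := hsub2 (by simp)
    have hy2 : (Sum.inr true : V ⊕ Bool) ∈ H₂.verts := hsub2 (by simp)
    have key : ∀ H : Subdigr (DPrime D s₁ t₁ s₂ t₂), H.IsStrong →
        (Sum.inr false : V ⊕ Bool) ∈ H.verts → (Sum.inr true : V ⊕ Bool) ∈ H.verts →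
        (((Sum.inr false : V ⊕ Bool), (Sum.inl s₁ : V ⊕ Bool)) ∈ H.arcs ∨
          ((Sum.inr false : V ⊕ Bool), (Sum.inl s₂ : V ⊕ Bool)) ∈ H.arcs) := by
      intro H hs hx hy
      rcases (hs _ hx _ hy).cases_head with h | ⟨c, hc, _⟩
      · simp at h
      · have hadj := H.arcs_adj _ hc
        cases c with
        | inl w =>
          rcases hadj with rfl | rfl
          · exact Or.inl hc
          · exact Or.inr hc
        | inr b => exact hadj.elim
    rcases key H₁ hs1 hx1 hy1 with h | h
    · exact backward_key D s₁ t₁ s₂ t₂ H₁ H₂ hs1 hs2 hx1 hy1 hx2 hy2 hv ha h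
    · rcases key H₂ hs2 hx2 hy2 with h' | h'
      · exact backward_key D s₁ t₁ s₂ t₂ H₂ H₁ hs2 hs1 hx2 hy2 hx1 hy1
          (by rw [Set.inter_comm]; exact hv) (by rw [Set.inter_comm]; exact ha) h'
      · have : ((Sum.inr false : V ⊕ Bool), (Sum.inl s₂ : V ⊕ Bool)) ∈ H₁.arcs ∩ H₂.arcs :=
          ⟨h, h'⟩
        rw [ha] at this
        exact this.elim
end
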